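/- arXiv:1507.04569 — 2 statements merged into one kernel-verified Lean document; each statement's English description precedes it below -/
import Mathlib

section
/- Let (G,L) be an uncolorable pair. Then for each block B of G there is a list-assignment L_B of B such that (B,L_B) is an uncolorable pair and, for every vertex v of G, L(v) is the union of the sets L_B(v) over all blocks B of G containing v. -/
open scoped Classical

/-- A signed graph: a finite loopless multigraph together with a sign `+1` or `-1`
on each edge. -/
structure SignedGraph where
  /-- vertex type -/
  V : Type
  /-- edge type -/
  E : Type
  fintypeV : Fintype V
  fintypeE : Fintype E
  decEqV : DecidableEq V
  /-- the two (distinct) endpoints of an edge, as an unordered pair -/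
  ends : E → Sym2 V
  loopless : ∀ e : E, ¬ (ends e).IsDiag
  /-- the sign of an edge -/
  sign : E → ℤ
  sign_unit : ∀ e : E, sign e = 1 ∨ sign e = -1

attribute [instance] SignedGraph.fintypeV SignedGraph.fintypeE SignedGraph.decEqV

namespace SignedGraph

variable (G : SignedGraph)

/-- The degree of a vertex: the number of edges incident with it. -/
noncomputable def degree (v : G.V) : ℕ :=
  (Finset.univ.filter (fun e : G.E => v ∈ G.ends e)).card

/-- The maximum degree `Δ(G)`. -/
noncomputable def maxDegree : ℕ :=
  Finset.univ.sup (fun v : G.V => G.degree v)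

/-- Two vertices are adjacent if some edge joins them. -/
def Adj (v w : G.V) : Prop := ∃ e : G.E, G.ends e = s(v, w)

/-- The simple graph of the adjacency relation (underlying simplification). -/
def adjGraph : SimpleGraph G.V where
  Adj := G.Adj
  symm := ⟨fun _ _ h => by obtain ⟨e, he⟩ := h; exact ⟨e, he.trans (Sym2.eq_swap)⟩⟩
  loopless := ⟨fun v h => by
    obtain ⟨e, he⟩ := h
    exact G.loopless e (by rw [he]; exact Sym2.mk_isDiag_iff.mpr rfl)⟩

/-- A signed graph is connected if its underlying graph is connected. -/
def Connected : Prop := G.adjGraph.Connected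

/-- The underlying graph is simple: no two parallel edges. -/
def SimpleUnderlying : Prop := ∀ e f : G.E, G.ends e = G.ends f → e = f

/-- A (proper) coloring of a signed graph. -/
def IsColoring (φ : G.V → ℤ) : Prop :=
  ∀ (e : G.E) (v w : G.V), G.ends e = s(v, w) → φ v ≠ G.sign e * φ w

/-- The color set `Z_k`:  `Z_{2h} = {±1, …, ±h}` and `Z_{2h+1} = Z_{2h} ∪ {0}`. -/
def ZSet (k : ℕ) : Set ℤ := {x : ℤ | 2 * |x| ≤ (k : ℤ) ∧ (x = 0 → Odd k)}

/-- The signed chromatic number `χ±(G)`: the least `k` such that `G` admits a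
coloring with image contained in `Z_k`. -/
noncomputable def signedChromaticNumber : ℕ :=
  sInf {k : ℕ | ∃ φ : G.V → ℤ, G.IsColoring φ ∧ ∀ v : G.V, φ v ∈ ZSet k}

/-- `G` admits a coloring from the lists `L`. -/
def ListColorable (L : G.V → Finset ℤ) : Prop :=
  ∃ φ : G.V → ℤ, G.IsColoring φ ∧ ∀ v : G.V, φ v ∈ L v

/-- The signed choice number `χℓ±(G)`. -/
noncomputable def signedChoiceNumber : ℕ :=
  sInf {k : ℕ | ∀ L : G.V → Finset ℤ, (∀ v : G.V, (L v).card = k) → G.ListColorable L}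

/-- `G` is degree choosable. -/
def DegreeChoosable : Prop :=
  ∀ L : G.V → Finset ℤ, (∀ v : G.V, (L v).card = G.degree v) → G.ListColorable L

/-- `(G, L)` is an uncolorable pair. -/
def UncolorablePair (L : G.V → Finset ℤ) : Prop :=
  G.Connected ∧ (∀ v : G.V, G.degree v ≤ (L v).card) ∧ ¬ G.ListColorable L

/-- Walks in a signed multigraph. -/
inductive Walk (G : SignedGraph) : G.V → G.V → Type
  | nil (v : G.V) : Walk G v v
  | cons {v w u : G.V} (e : G.E) (he : G.ends e = s(v, w)) (p : Walk G w u) : Walk G v u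

namespace Walk

variable {G}

/-- The list of edges of a walk. -/
def edges : ∀ {v w : G.V}, Walk G v w → List G.E
  | _, _, .nil _ => []
  | _, _, .cons e _ p => e :: edges p

/-- The list of vertices of a walk. -/
def support : ∀ {v w : G.V}, Walk G v w → List G.V
  | _, _, .nil v => [v]
  | v, _, .cons _ _ p => v :: support p

/-- The length of a walk. -/
def length {v w : G.V} (p : Walk G v w) : ℕ := p.edges.length

/-- The sign product of a walk. -/
def signProd {v w : G.V} (p : Walk G v w) : ℤ := (p.edges.map G.sign).prod

/-- A cycle: a nonempty closed walk with no repeated edges and no repeated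
vertices (except the first = last). -/
def IsCycle {v : G.V} (p : Walk G v v) : Prop :=
  p.edges ≠ [] ∧ p.edges.Nodup ∧ p.support.tail.Nodup

end Walk

/-- A signed graph is balanced if every cycle has positive sign product. -/
def Balanced : Prop := ∀ (v : G.V) (p : Walk G v v), p.IsCycle → p.signProd = 1

/-- A signed graph is antibalanced if every even cycle has positive sign product
and every odd cycle has negative sign product. -/
def Antibalanced : Prop :=
  ∀ (v : G.V) (p : Walk G v v), p.IsCycle → p.signProd = (-1) ^ p.length

/-- `G` is balanced with parts `X`, `Y`: the vertex set is the disjoint union of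
`X` and `Y` and an edge is negative iff it joins `X` to `Y`. -/
def BalancedWithParts (X Y : Set G.V) : Prop :=
  X ∪ Y = Set.univ ∧ Disjoint X Y ∧
  ∀ (e : G.E) (v w : G.V), G.ends e = s(v, w) →
    (G.sign e = -1 ↔ (v ∈ X ∧ w ∈ Y) ∨ (v ∈ Y ∧ w ∈ X))

/-- The underlying graph is a complete (simple) graph. -/
def IsCompleteGraph : Prop :=
  G.SimpleUnderlying ∧ ∀ v w : G.V, v ≠ w → G.Adj v w

/-- `G` is a balanced complete graph. -/
def IsBalancedComplete : Prop := G.IsCompleteGraph ∧ G.Balanced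

/-- The underlying graph is a cycle. -/
def IsCycleGraph : Prop :=
  G.Connected ∧ G.SimpleUnderlying ∧ ∀ v : G.V, G.degree v = 2

/-- `G` is a balanced odd cycle. -/
def IsBalancedOddCycle : Prop :=
  G.IsCycleGraph ∧ G.Balanced ∧ Odd (Fintype.card G.V)

/-- `G` is an unbalanced even cycle. -/
def IsUnbalancedEvenCycle : Prop :=
  G.IsCycleGraph ∧ ¬ G.Balanced ∧ Even (Fintype.card G.V)

/-- Every edge of `G` comes in a pair of parallel edges of opposite sign, and
any two vertices are joined by at most two edges. -/
def Doubled : Prop :=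
  ∀ (e : G.E) (v w : G.V), G.ends e = s(v, w) →
    ∃ f : G.E, f ≠ e ∧ G.ends f = s(v, w) ∧ G.sign f = - G.sign e ∧
      ∀ g : G.E, G.ends g = s(v, w) → g = e ∨ g = f

/-- `G` is a `2Kₙ` for some `n ≥ 2`. -/
def IsDoubleComplete : Prop :=
  2 ≤ Fintype.card G.V ∧ G.Doubled ∧ ∀ v w : G.V, v ≠ w → G.Adj v w

/-- `G` is a `2Cₙ` for some odd `n ≥ 3`. -/
def IsDoubleOddCycle : Prop :=
  G.Connected ∧ G.Doubled ∧ (∀ v : G.V, G.degree v = 4) ∧ Odd (Fintype.card G.V)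

/-- A brick. -/
def IsBrick : Prop :=
  G.IsBalancedComplete ∨ G.IsBalancedOddCycle ∨ G.IsUnbalancedEvenCycle ∨
    G.IsDoubleComplete ∨ G.IsDoubleOddCycle

/-- A subgraph of a signed graph. -/
structure Subgraph (G : SignedGraph) where
  verts : Set G.V
  edges : Set G.E
  ends_mem : ∀ e ∈ edges, ∀ v ∈ G.ends e, v ∈ verts

namespace Subgraph

variable {G}

/-- A subgraph, regarded as a signed graph in its own right. -/
noncomputable def toSG (H : G.Subgraph) : SignedGraph where
  V := H.verts
  E := H.edges
  fintypeV := Fintype.ofFinite _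
  fintypeE := Fintype.ofFinite _
  decEqV := inferInstance
  ends := fun e =>
    s((⟨(G.ends e.1).out.1, H.ends_mem e.1 e.2 _ (Sym2.out_fst_mem _)⟩ : H.verts),
      (⟨(G.ends e.1).out.2, H.ends_mem e.1 e.2 _ (Sym2.out_snd_mem _)⟩ : H.verts))
  loopless := fun e h => by
    rw [Sym2.mk_isDiag_iff, Subtype.mk.injEq] at h
    exact G.loopless e.1 (by
      rw [← (G.ends e.1).out_eq]
      exact Sym2.mk_isDiag_iff.mpr h)
  sign := fun e => G.sign e.1
  sign_unit := fun e => G.sign_unit e.1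

/-- Delete a vertex (and all incident edges) from a subgraph. -/
def delete (H : G.Subgraph) (v : G.V) : G.Subgraph where
  verts := H.verts \ {v}
  edges := {e ∈ H.edges | v ∉ G.ends e}
  ends_mem := fun e he w hw =>
    ⟨H.ends_mem e he.1 w hw, fun h => he.2 (by rwa [Set.mem_singleton_iff.mp h] at hw)⟩

/-- Subgraph inclusion. -/
def Le (H K : G.Subgraph) : Prop := H.verts ⊆ K.verts ∧ H.edges ⊆ K.edges

/-- `v` is a separating (cut) vertex of the subgraph `H`. -/
def IsCutVertex (H : G.Subgraph) (v : G.V) : Prop :=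
  v ∈ H.verts ∧ (H.delete v).verts.Nonempty ∧ ¬ (H.delete v).toSG.Connected

/-- `B` is a block of `G`: a maximal connected subgraph without a cut vertex. -/
def IsBlock (B : G.Subgraph) : Prop :=
  B.toSG.Connected ∧ (∀ v : G.V, ¬ B.IsCutVertex v) ∧
  ∀ B' : G.Subgraph, B.Le B' → B'.toSG.Connected →
    (∀ v : G.V, ¬ B'.IsCutVertex v) → B'.Le B

/-- The degree of a vertex in a subgraph. -/
noncomputable def degree (H : G.Subgraph) (v : G.V) : ℕ :=
  (Finset.univ.filter (fun e : G.E => e ∈ H.edges ∧ v ∈ G.ends e)).card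

/-- The minimum degree of a subgraph. -/
noncomputable def minDegree (H : G.Subgraph) : ℕ :=
  sInf {d : ℕ | ∃ v ∈ H.verts, H.degree v = d}

/-- The subgraph admits a coloring from the lists `L`. -/
def ListColorable (H : G.Subgraph) (L : G.V → Finset ℤ) : Prop :=
  ∃ φ : G.V → ℤ,
    (∀ e ∈ H.edges, ∀ v w : G.V, G.ends e = s(v, w) → φ v ≠ G.sign e * φ w) ∧
    ∀ v ∈ H.verts, φ v ∈ L v

/-- A proper subgraph. -/
def IsProper (H : G.Subgraph) : Prop :=
  H.verts ≠ Set.univ ∨ H.edges ≠ Set.univ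

end Subgraph

/-- The subgraph consisting of all of `G`. -/
def topSubgraph : G.Subgraph := ⟨Set.univ, Set.univ, fun _ _ _ _ => trivial⟩

/-- A separating (cut) vertex of `G`. -/
def IsCutVertex (v : G.V) : Prop := G.topSubgraph.IsCutVertex v

/-- The coloring number `col(G)`: one plus the maximum over all (nonempty)
subgraphs of the minimum degree. -/
noncomputable def coloringNumber : ℕ :=
  1 + sSup {d : ℕ | ∃ H : G.Subgraph, H.verts.Nonempty ∧ H.minDegree = d}

/-- The subgraph induced by a vertex set `X`. -/
def induced (X : Set G.V) : G.Subgraph where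
  verts := X
  edges := {e : G.E | ∀ v ∈ G.ends e, v ∈ X}
  ends_mem := fun e he v hv => he v hv

/-- `G` is `L`-critical. -/
def LCritical (L : G.V → Finset ℤ) : Prop :=
  ¬ G.ListColorable L ∧ ∀ H : G.Subgraph, H.IsProper → H.ListColorable L

/-- `G` is `k`-critical (with respect to the signed chromatic number). -/
def KCritical (k : ℕ) : Prop :=
  G.signedChromaticNumber = k ∧
  ∀ H : G.Subgraph, H.IsProper → H.toSG.signedChromaticNumber ≤ k - 1

/-- `G` is `k`-list-critical. -/
def KListCritical (k : ℕ) : Prop :=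
  ∃ L : G.V → Finset ℤ, (∀ v : G.V, (L v).card = k - 1) ∧ G.LCritical L

/-- The signed graph `2H` obtained from a simple graph `H` by replacing every
edge by a pair of parallel edges, one positive and one negative. -/
noncomputable def double {W : Type} [Fintype W] [DecidableEq W] (H : SimpleGraph W) :
    SignedGraph where
  V := W
  E := H.edgeSet × Bool
  fintypeV := inferInstance
  fintypeE := Fintype.ofFinite _
  decEqV := inferInstance
  ends := fun e => e.1.1
  loopless := fun e => H.not_isDiag_of_mem_edgeSet e.1.2
  sign := fun e => if e.2 then 1 else -1
  sign_unit := fun e => by by_cases h : e.2 <;> simp [h]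

end SignedGraph


/-! ### Auxiliary development for Statement 13 -/

namespace SignedGraph

variable {G : SignedGraph}

theorem Subgraph.ext' {H K : G.Subgraph} (hv : H.verts = K.verts) (he : H.edges = K.edges) :
    H = K := by
  cases H; cases K; simp_all

instance : Finite G.Subgraph := by
  have : Finite (Set G.V × Set G.E) := inferInstance
  exact Finite.of_injective (fun H : G.Subgraph => (H.verts, H.edges)) (by
    intro H K h
    exact Subgraph.ext' (congrArg Prod.fst h) (congrArg Prod.snd h))

lemma exists_other {e : G.E} {v : G.V} (hv : v ∈ G.ends e) :
    ∃ w, w ≠ v ∧ G.ends e = s(v, w) := by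
  obtain ⟨w, hw⟩ := Sym2.mem_iff_exists.mp hv
  refine ⟨w, ?_, hw⟩
  rintro rfl
  exact G.loopless e (by rw [hw]; exact Sym2.mk_isDiag_iff.mpr rfl)

lemma mem_ends_of_eq {e : G.E} {x y z : G.V} (h : G.ends e = s(x, y)) (hz : z ∈ G.ends e) :
    z = x ∨ z = y := by
  rw [h] at hz; exact Sym2.mem_iff'.mp hz

/-- The simple graph on `G.V` whose adjacency is realized by an edge from `Es`. -/
def eAdj (G : SignedGraph) (Es : Set G.E) : SimpleGraph G.V where
  Adj x y := ∃ e ∈ Es, G.ends e = s(x, y)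
  symm := ⟨by rintro x y ⟨e, he, h⟩; exact ⟨e, he, h.trans Sym2.eq_swap⟩⟩
  loopless := by
    refine ⟨?_⟩
    rintro x ⟨e, he, h⟩
    exact G.loopless e (by rw [h]; exact Sym2.mk_isDiag_iff.mpr rfl)

lemma eAdj_mono {E1 E2 : Set G.E} (h : E1 ⊆ E2) : G.eAdj E1 ≤ G.eAdj E2 := by
  rintro x y ⟨e, he, hh⟩; exact ⟨e, h he, hh⟩

lemma eAdj_le_adjGraph (Es : Set G.E) : G.eAdj Es ≤ G.adjGraph := by
  rintro x y ⟨e, _, hh⟩; exact ⟨e, hh⟩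

/-- Edges all of whose endpoints lie in `S`. -/
def indE (G : SignedGraph) (S : Set G.V) : Set G.E := {e | ∀ z ∈ G.ends e, z ∈ S}

/-- Degree of `v` inside the induced sub-multigraph on `S`. -/
noncomputable def degS (G : SignedGraph) (S : Set G.V) (v : G.V) : ℕ :=
  (Finset.univ.filter (fun e : G.E => e ∈ G.indE S ∧ v ∈ G.ends e)).card

/-- `φ` is a proper coloring of the induced sub-multigraph on `S`. -/
def IsColOn (G : SignedGraph) (S : Set G.V) (φ : G.V → ℤ) : Prop :=
  ∀ e ∈ G.indE S, ∀ x y, G.ends e = s(x, y) → φ x ≠ G.sign e * φ y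

/-- There is an `L`-coloring of the induced sub-multigraph on `S` taking value `c` at `u`. -/
def Ext (G : SignedGraph) (L : G.V → Finset ℤ) (S : Set G.V) (u : G.V) (c : ℤ) : Prop :=
  ∃ φ : G.V → ℤ, G.IsColOn S φ ∧ (∀ w ∈ S, φ w ∈ L w) ∧ φ u = c

lemma Ext.mono {L : G.V → Finset ℤ} {S T : Set G.V} {u : G.V} {c : ℤ}
    (hST : S ⊆ T) (h : G.Ext L T u c) : G.Ext L S u c := by
  obtain ⟨φ, h1, h2, h3⟩ := h
  exact ⟨φ, fun e he => h1 e (fun z hz => hST (he z hz)), fun w hw => h2 w (hST hw), h3⟩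

/-- The part of `G` hanging at `u` away from `B` (including `u`). -/
def ASet (B : G.Subgraph) (u : G.V) : Set G.V :=
  {w | ∃ p : G.adjGraph.Walk u w, ∀ x ∈ p.support, x ∈ B.verts → x = u}

lemma self_mem_ASet {B : G.Subgraph} {u : G.V} : u ∈ ASet B u :=
  ⟨SimpleGraph.Walk.nil, by simp⟩

lemma ASet_inter_verts {B : G.Subgraph} {u w : G.V} (hw : w ∈ ASet B u) (hwB : w ∈ B.verts) :
    w = u := by
  obtain ⟨p, hp⟩ := hw
  exact hp w p.end_mem_support hwB

lemma ASet_of_walk {B : G.Subgraph} {u w : G.V} {p : G.adjGraph.Walk u w}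
    (hp : ∀ x ∈ p.support, x ∈ B.verts → x = u) {x : G.V} (hx : x ∈ p.support) :
    x ∈ ASet B u :=
  ⟨p.takeUntil x hx, fun z hz => hp z (p.support_takeUntil_subset hx hz)⟩

lemma ASet_extend {B : G.Subgraph} {u w x : G.V} (hw : w ∈ ASet B u)
    (hadj : G.adjGraph.Adj w x) (hx : x ∉ B.verts) : x ∈ ASet B u := by
  obtain ⟨p, hp⟩ := hw
  refine ⟨p.concat hadj, ?_⟩
  intro z hz hzB
  rw [SimpleGraph.Walk.support_concat, List.mem_append] at hz
  rcases hz with hz | hz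
  · exact hp z hz hzB
  · simp only [List.mem_singleton] at hz; subst hz; exact absurd hzB hx


lemma toSG_ends_val {H : G.Subgraph} (e : H.toSG.E) :
    Sym2.map Subtype.val (H.toSG.ends e) = G.ends e.1 := by
  show Sym2.map Subtype.val s(_, _) = _
  rw [Sym2.map_pair_eq]
  exact (G.ends e.1).out_eq

lemma toSG_ends_iff {H : G.Subgraph} (e : H.toSG.E) (a b : H.toSG.V) :
    H.toSG.ends e = s(a, b) ↔ G.ends e.1 = s(a.1, b.1) := by
  constructor
  · intro h
    rw [← toSG_ends_val e, h]
    exact Sym2.map_pair_eq _ _ _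
  · intro h
    have key := toSG_ends_val e
    rw [h] at key
    have : H.toSG.ends e = s((⟨(G.ends e.1).out.1, _⟩ : H.verts), ⟨(G.ends e.1).out.2, _⟩) := rfl
    rw [this] at key ⊢
    rw [Sym2.map_pair_eq] at key
    rw [Sym2.eq_iff] at key
    refine Sym2.eq_iff.mpr ?_
    rcases key with ⟨h1, h2⟩ | ⟨h1, h2⟩
    · exact Or.inl ⟨Subtype.ext h1, Subtype.ext h2⟩
    · exact Or.inr ⟨Subtype.ext h1, Subtype.ext h2⟩

lemma mem_toSG_ends_iff {H : G.Subgraph} (e : H.toSG.E) (a : H.toSG.V) :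
    a ∈ H.toSG.ends e ↔ a.1 ∈ G.ends e.1 := by
  constructor
  · intro h
    obtain ⟨b, hb⟩ := Sym2.mem_iff_exists.mp h
    rw [toSG_ends_iff] at hb
    rw [hb]; exact Sym2.mem_mk_left _ _
  · intro h
    obtain ⟨w, hwne, hw⟩ := exists_other h
    have hwv : w ∈ H.verts := H.ends_mem e.1 e.2 w (by rw [hw]; exact Sym2.mem_mk_right _ _)
    have : H.toSG.ends e = s(a, ⟨w, hwv⟩) := (toSG_ends_iff e a ⟨w, hwv⟩).mpr hw
    rw [this]; exact Sym2.mem_mk_left _ _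

lemma toSG_degree {H : G.Subgraph} (u : H.toSG.V) : H.toSG.degree u = H.degree u.1 := by
  classical
  unfold SignedGraph.degree Subgraph.degree
  refine Finset.card_bij (fun e _ => e.1) ?_ ?_ ?_
  · intro e he
    simp only [Finset.mem_filter, Finset.mem_univ, true_and] at he ⊢
    exact ⟨e.2, (mem_toSG_ends_iff e u).mp he⟩
  · intro e1 _ e2 _ h
    exact Subtype.ext h
  · intro e he
    simp only [Finset.mem_filter, Finset.mem_univ, true_and] at he
    exact ⟨⟨e, he.1⟩, Finset.mem_filter.mpr ⟨Finset.mem_univ _, (mem_toSG_ends_iff ⟨e, he.1⟩ u).mpr he.2⟩, rfl⟩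

lemma reach_lift (H : G.Subgraph) : ∀ {x y : G.V} (_ : (G.eAdj H.edges).Walk x y)
    (hx : x ∈ H.verts) (hy : y ∈ H.verts),
    H.toSG.adjGraph.Reachable ⟨x, hx⟩ ⟨y, hy⟩ := by
  intro x y p
  induction p with
  | nil => intro hx hy; exact SimpleGraph.Reachable.refl _
  | @cons x z y h p ih =>
    intro hx hy
    obtain ⟨e, he, hends⟩ := h
    have hz : z ∈ H.verts := H.ends_mem e he z (by rw [hends]; exact Sym2.mem_mk_right _ _)
    have hadj : H.toSG.adjGraph.Adj ⟨x, hx⟩ ⟨z, hz⟩ :=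
      ⟨⟨e, he⟩, (toSG_ends_iff ⟨e, he⟩ ⟨x, hx⟩ ⟨z, hz⟩).mpr hends⟩
    exact hadj.reachable.trans (ih hz hy)

lemma reach_unlift (H : G.Subgraph) : ∀ {a b : H.toSG.V} (_ : H.toSG.adjGraph.Walk a b),
    (G.eAdj H.edges).Reachable a.1 b.1 := by
  intro a b p
  induction p with
  | nil => exact SimpleGraph.Reachable.refl _
  | @cons a c b hadj p ih =>
    obtain ⟨e, hends⟩ := (hadj : H.toSG.Adj a c)
    have h1 : (G.eAdj H.edges).Adj a.1 c.1 := ⟨e.1, e.2, (toSG_ends_iff e _ _).mp hends⟩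
    exact h1.reachable.trans ih

lemma toSG_connected_iff (H : G.Subgraph) :
    H.toSG.Connected ↔ H.verts.Nonempty ∧
      ∀ x ∈ H.verts, ∀ y ∈ H.verts, (G.eAdj H.edges).Reachable x y := by
  constructor
  · intro hc
    have hc' : H.toSG.adjGraph.Connected := hc
    have hne : H.verts.Nonempty := by
      obtain ⟨⟨x, hx⟩⟩ := hc'.nonempty
      exact ⟨x, hx⟩
    refine ⟨hne, fun x hx y hy => ?_⟩
    have := hc'.preconnected ⟨x, hx⟩ ⟨y, hy⟩
    obtain ⟨p⟩ := this
    exact reach_unlift H p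
  · rintro ⟨hne, hreach⟩
    show H.toSG.adjGraph.Connected
    rw [SimpleGraph.connected_iff]
    refine ⟨?_, ⟨⟨hne.choose, hne.choose_spec⟩⟩⟩
    rintro ⟨x, hx⟩ ⟨y, hy⟩
    obtain ⟨p⟩ := hreach x hx y hy
    exact reach_lift H p hx hy

lemma conn_mono {H K : G.Subgraph} (hv : K.verts = H.verts) (he : H.edges ⊆ K.edges)
    (h : H.toSG.Connected) : K.toSG.Connected := by
  rw [toSG_connected_iff] at h ⊢
  rw [hv]
  exact ⟨h.1, fun x hx y hy => (h.2 x hx y hy).mono (eAdj_mono he)⟩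

lemma reach_of_walk_edges {V' : SimpleGraph G.V} : ∀ {a b : G.V} (p : V'.Walk a b)
    (Es : Set G.E) (_ : ∀ x y, s(x, y) ∈ p.edges → ∃ e ∈ Es, G.ends e = s(x, y)),
    (G.eAdj Es).Reachable a b := by
  intro a b p
  induction p with
  | nil => intro _ _; exact SimpleGraph.Reachable.refl _
  | @cons a c b h p ih =>
    intro Es hEs
    have hadj : (G.eAdj Es).Adj a c := hEs a c (by simp [SimpleGraph.Walk.edges_cons])
    exact hadj.reachable.trans (ih Es (fun x y hxy =>
      hEs x y (by simp [SimpleGraph.Walk.edges_cons, hxy])))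

lemma firstHit {T : Set G.V} : ∀ {a b : G.V} (p : G.adjGraph.Walk a b), b ∈ T →
    ∃ y ∈ T, ∃ q : G.adjGraph.Walk a y, (∀ x ∈ q.support, x ∈ p.support) ∧
      ∀ x ∈ q.support, x ∈ T → x = y := by
  intro a b p
  induction p with
  | nil =>
    intro hb
    exact ⟨_, hb, SimpleGraph.Walk.nil, by simp, by simp⟩
  | @cons a c b h p ih =>
    intro hb
    by_cases ha : a ∈ T
    · refine ⟨a, ha, SimpleGraph.Walk.nil, by simp, by simp⟩
    · obtain ⟨y, hy, q, hsup, hlast⟩ := ih hb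
      refine ⟨y, hy, SimpleGraph.Walk.cons h q, ?_, ?_⟩
      · intro x hx
        rw [SimpleGraph.Walk.support_cons, List.mem_cons] at hx ⊢
        rcases hx with hx | hx
        · exact Or.inl hx
        · exact Or.inr (hsup x hx)
      · intro x hx hxT
        rw [SimpleGraph.Walk.support_cons, List.mem_cons] at hx
        rcases hx with rfl | hx
        · exact absurd hxT ha
        · exact hlast x hx hxT

lemma not_cut_del_conn {H : G.Subgraph} (hnc : ∀ v, ¬ H.IsCutVertex v) {z : G.V}
    (hz : z ∈ H.verts) (hne : (H.delete z).verts.Nonempty) : (H.delete z).toSG.Connected := by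
  have h := hnc z
  rw [Subgraph.IsCutVertex] at h
  push_neg at h
  exact h hz hne

lemma exists_block_ge (H0 : G.Subgraph) (hc : H0.toSG.Connected)
    (hnc : ∀ v, ¬ H0.IsCutVertex v) : ∃ B : G.Subgraph, B.IsBlock ∧ H0.Le B := by
  classical
  set F : Set G.Subgraph := {H | H0.Le H ∧ H.toSG.Connected ∧ ∀ v, ¬ H.IsCutVertex v} with hF
  have hne : F.Nonempty := ⟨H0, ⟨subset_rfl, subset_rfl⟩, hc, hnc⟩
  obtain ⟨B, hBF, hmax⟩ := Set.Finite.exists_maximalFor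
    (fun H : G.Subgraph => H.verts.ncard + H.edges.ncard) F (Set.toFinite F) hne
  refine ⟨B, ⟨hBF.2.1, hBF.2.2, ?_⟩, hBF.1⟩
  intro B' hle hconn hncut
  have hB'F : B' ∈ F := ⟨⟨hBF.1.1.trans hle.1, hBF.1.2.trans hle.2⟩, hconn, hncut⟩
  have h1 : B.verts.ncard ≤ B'.verts.ncard := Set.ncard_le_ncard hle.1 (Set.toFinite _)
  have h2 : B.edges.ncard ≤ B'.edges.ncard := Set.ncard_le_ncard hle.2 (Set.toFinite _)
  have heq := hmax hB'F (by beta_reduce; omega)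
  simp only at heq
  have hv := Set.eq_of_subset_of_ncard_le hle.1 (by omega) (Set.toFinite _)
  have hee := Set.eq_of_subset_of_ncard_le hle.2 (by omega) (Set.toFinite _)
  exact ⟨hv.symm.subset, hee.symm.subset⟩

lemma Subgraph.IsBlock.edge_mem {B : G.Subgraph} (hB : B.IsBlock) {e : G.E}
    (h : ∀ z ∈ G.ends e, z ∈ B.verts) : e ∈ B.edges := by
  classical
  by_contra hne
  let B' : G.Subgraph := ⟨B.verts, insert e B.edges, by
    intro f hf z hz
    rcases Set.mem_insert_iff.mp hf with rfl | hf
    · exact h z hz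
    · exact B.ends_mem f hf z hz⟩
  have hle : B.Le B' := ⟨subset_rfl, Set.subset_insert _ _⟩
  have hconn : B'.toSG.Connected := conn_mono (H := B) (K := B') rfl (Set.subset_insert _ _) hB.1
  have hncut : ∀ v, ¬ B'.IsCutVertex v := by
    rintro z ⟨hzm, hnem, hnconn⟩
    apply hnconn
    have h1 : (B.delete z).toSG.Connected := not_cut_del_conn hB.2.1 hzm hnem
    exact conn_mono (H := B.delete z) (K := B'.delete z) rfl (by rintro f ⟨hf1, hf2⟩; exact ⟨Set.subset_insert _ _ hf1, hf2⟩) h1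
  have := hB.2.2 B' hle hconn hncut
  exact hne (this.2 (Set.mem_insert _ _))

lemma path_prefix_avoid {a b : G.V} {p : G.adjGraph.Walk a b} (hp : p.IsPath) {x : G.V}
    (hx : x ∈ p.support) (hxb : x ≠ b) : b ∉ (p.takeUntil x hx).support := by
  intro hb
  have hsp := p.take_spec hx
  have hnd := hp.support_nodup
  rw [← hsp, SimpleGraph.Walk.support_append] at hnd
  have hdisj := List.disjoint_of_nodup_append hnd
  have hb2 : b ∈ (p.dropUntil x hx).support.tail := by
    have hbm : b ∈ (p.dropUntil x hx).support := SimpleGraph.Walk.end_mem_support _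
    rw [SimpleGraph.Walk.support_eq_cons] at hbm
    rcases List.mem_cons.mp hbm with rfl | hbm
    · exact absurd rfl hxb.symm
    · exact hbm
  exact hdisj hb hb2

lemma path_suffix_avoid {a b : G.V} {p : G.adjGraph.Walk a b} (hp : p.IsPath) {x : G.V}
    (hx : x ∈ p.support) (hxa : x ≠ a) : a ∉ (p.dropUntil x hx).support := by
  intro ha
  have hsp := p.take_spec hx
  have hnd := hp.support_nodup
  rw [← hsp, SimpleGraph.Walk.support_append] at hnd
  have hdisj := List.disjoint_of_nodup_append hnd
  have ha2 : a ∈ (p.dropUntil x hx).support.tail := by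
    rw [SimpleGraph.Walk.support_eq_cons] at ha
    rcases List.mem_cons.mp ha with rfl | ha
    · exact absurd rfl hxa
    · exact ha
  exact hdisj (SimpleGraph.Walk.start_mem_support _) ha2

lemma earcore {B : G.Subgraph} (hB : B.IsBlock) {u u' : G.V} (hu : u ∈ B.verts)
    (hu' : u' ∈ B.verts) (hne : u ≠ u') (r : G.adjGraph.Walk u u')
    (havoid : ∀ x ∈ r.support, x ∈ B.verts → x = u ∨ x = u')
    (hedge : s(u, u') ∉ r.edges) : False := by
  classical
  obtain ⟨P, hPpath, hPsup, hPed⟩ : ∃ P : G.adjGraph.Walk u u', P.IsPath ∧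
      (∀ x ∈ P.support, x ∈ r.support) ∧ (∀ s ∈ P.edges, s ∈ r.edges) :=
    ⟨r.bypass, r.bypass_isPath, fun x hx => r.support_bypass_subset hx,
      fun s hs => r.edges_bypass_subset hs⟩
  have hintz : ∃ z ∈ P.support, z ∉ B.verts := by
    cases P with
    | nil => exact absurd rfl hne
    | @cons _ z _ hadj q =>
      rw [SimpleGraph.Walk.cons_isPath_iff] at hPpath
      have hzu : z ≠ u := fun hzz => hPpath.2 (hzz ▸ q.start_mem_support)
      have hzu' : z ≠ u' := by
        rintro rfl
        exact hedge (hPed _ (by rw [SimpleGraph.Walk.edges_cons]; exact List.mem_cons_self))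
      have hzsup : z ∈ (SimpleGraph.Walk.cons hadj q).support := by
        rw [SimpleGraph.Walk.support_cons]
        exact List.mem_cons_of_mem _ q.start_mem_support
      refine ⟨z, hzsup, fun hzB => ?_⟩
      rcases havoid z (hPsup z hzsup) hzB with h | h
      · exact hzu h
      · exact hzu' h
  let Vs : Set G.V := B.verts ∪ {x | x ∈ P.support}
  let Es : Set G.E := B.edges ∪ {e | G.ends e ∈ P.edges}
  have hEs_mem : ∀ e ∈ Es, ∀ z ∈ G.ends e, z ∈ Vs := by
    intro e he z hz
    rcases he with he | he
    · exact Or.inl (B.ends_mem e he z hz)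
    · right
      obtain ⟨w, hwne, hw⟩ := exists_other hz
      have he' : G.ends e ∈ P.edges := he
      rw [hw] at he'
      exact SimpleGraph.Walk.fst_mem_support_of_mem_edges P he'
  let B' : G.Subgraph := ⟨Vs, Es, hEs_mem⟩
  have hDreach : ∀ (z0 : G.V) {a b : G.V} (w : G.adjGraph.Walk a b),
      (∀ s ∈ w.edges, s ∈ P.edges) → z0 ∉ w.support →
      (G.eAdj {e | e ∈ Es ∧ z0 ∉ G.ends e}).Reachable a b := by
    intro z0 a b w hwed hwz
    apply reach_of_walk_edges w
    intro x y hxy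
    obtain ⟨e, he⟩ := w.adj_of_mem_edges hxy
    refine ⟨e, ⟨Or.inr (by rw [Set.mem_setOf_eq, he]; exact hwed _ hxy), ?_⟩, he⟩
    intro hz0
    rcases mem_ends_of_eq he hz0 with rfl | rfl
    · exact hwz (w.fst_mem_support_of_mem_edges hxy)
    · exact hwz (w.snd_mem_support_of_mem_edges hxy)
  have hBreach : ∀ (z0 : G.V), ∀ x ∈ B.verts, x ≠ z0 → ∀ y ∈ B.verts, y ≠ z0 →
      (G.eAdj {e | e ∈ Es ∧ z0 ∉ G.ends e}).Reachable x y := by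
    intro z0 x hx hxz y hy hyz
    by_cases hz0 : z0 ∈ B.verts
    · have hne' : (B.delete z0).verts.Nonempty := ⟨x, hx, by simp [hxz]⟩
      have hc := not_cut_del_conn hB.2.1 hz0 hne'
      rw [toSG_connected_iff] at hc
      have hr := hc.2 x ⟨hx, by simp [hxz]⟩ y ⟨hy, by simp [hyz]⟩
      exact hr.mono (eAdj_mono (by rintro e ⟨he1, he2⟩; exact ⟨Or.inl he1, he2⟩))
    · have hc := hB.1
      rw [toSG_connected_iff] at hc
      refine (hc.2 x hx y hy).mono (eAdj_mono ?_)
      intro e he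
      exact ⟨Or.inl he, fun hz => hz0 (B.ends_mem e he _ hz)⟩
  have hB'conn : B'.toSG.Connected := by
    rw [toSG_connected_iff]
    have hhub : ∀ x ∈ Vs, (G.eAdj Es).Reachable x u := by
      intro x hx
      rcases hx with hx | hx
      · have hc := hB.1
        rw [toSG_connected_iff] at hc
        exact (hc.2 x hx u hu).mono (eAdj_mono Set.subset_union_left)
      · refine (reach_of_walk_edges (P.takeUntil x hx) Es (fun a b hab => ?_)).symm
        obtain ⟨e, he⟩ := SimpleGraph.Walk.adj_of_mem_edges _ hab
        exact ⟨e, Or.inr (by rw [Set.mem_setOf_eq, he]; exact P.edges_takeUntil_subset hx hab), he⟩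
    exact ⟨⟨u, Or.inl hu⟩, fun x hx y hy => (hhub x hx).trans (hhub y hy).symm⟩
  have hB'ncut : ∀ z0, ¬ B'.IsCutVertex z0 := by
    rintro z0 ⟨hz0m, hz0ne, hz0nc⟩
    apply hz0nc
    rw [toSG_connected_iff]
    refine ⟨hz0ne, ?_⟩
    suffices hh : ∃ h0 ∈ (B'.delete z0).verts, ∀ x ∈ (B'.delete z0).verts,
        (G.eAdj {e | e ∈ Es ∧ z0 ∉ G.ends e}).Reachable x h0 by
      obtain ⟨h0, hh0, hall⟩ := hh
      intro x hx y hy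
      exact ((hall x hx).trans (hall y hy).symm).mono (eAdj_mono (by
        rintro e ⟨he1, he2⟩; exact ⟨he1, he2⟩))
    by_cases hz0u : z0 = u
    · subst hz0u
      refine ⟨u', ⟨Or.inl hu', by simp [hne.symm]⟩, ?_⟩
      rintro x ⟨hx, hxz⟩
      simp only [Set.mem_singleton_iff] at hxz
      rcases hx with hx | hx
      · exact hBreach z0 x hx hxz u' hu' hne.symm
      · have hxne : x ≠ z0 := hxz
        have hz0nsup := path_suffix_avoid hPpath hx (by exact hxne)
        exact hDreach z0 (P.dropUntil x hx) (fun s hs => P.edges_dropUntil_subset hx hs) hz0nsup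
    · by_cases hz0u' : z0 = u'
      · subst hz0u'
        refine ⟨u, ⟨Or.inl hu, by simp [hne]⟩, ?_⟩
        rintro x ⟨hx, hxz⟩
        simp only [Set.mem_singleton_iff] at hxz
        rcases hx with hx | hx
        · exact hBreach z0 x hx hxz u hu hne
        · have hz0nsup := path_prefix_avoid hPpath hx (by exact hxz)
          exact (hDreach z0 (P.takeUntil x hx) (fun s hs => P.edges_takeUntil_subset hx hs)
            hz0nsup).symm
      · refine ⟨u, ⟨Or.inl hu, by simp [Ne.symm hz0u]⟩, ?_⟩
        rintro x ⟨hx, hxz⟩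
        simp only [Set.mem_singleton_iff] at hxz
        rcases hx with hx | hx
        · exact hBreach z0 x hx hxz u hu (Ne.symm hz0u)
        · by_cases hz0P : z0 ∈ P.support
          · have hsplit : x ∈ (P.takeUntil z0 hz0P).support ∨ x ∈ (P.dropUntil z0 hz0P).support := by
              have hx' := hx
              rw [← P.take_spec hz0P, SimpleGraph.Walk.support_append] at hx'
              rcases List.mem_append.mp hx' with h | h
              · exact Or.inl h
              · exact Or.inr (List.mem_of_mem_tail h)
            rcases hsplit with hx2 | hx2
            · have htk : (P.takeUntil z0 hz0P).IsPath := hPpath.takeUntil _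
              have hz0nsup := path_prefix_avoid htk hx2 (by exact hxz)
              exact (hDreach z0 ((P.takeUntil z0 hz0P).takeUntil x hx2)
                (fun s hs => P.edges_takeUntil_subset hz0P
                  ((P.takeUntil z0 hz0P).edges_takeUntil_subset hx2 hs)) hz0nsup).symm
            · have hdr : (P.dropUntil z0 hz0P).IsPath := hPpath.dropUntil _
              have hz0nsup := path_suffix_avoid hdr hx2 (by exact hxz)
              have h1 := hDreach z0 ((P.dropUntil z0 hz0P).dropUntil x hx2)
                (fun s hs => P.edges_dropUntil_subset hz0P
                  ((P.dropUntil z0 hz0P).edges_dropUntil_subset hx2 hs)) hz0nsup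
              exact h1.trans (hBreach z0 u' hu' (Ne.symm hz0u') u hu (Ne.symm hz0u))
          · have hz0nsup : z0 ∉ (P.takeUntil x hx).support :=
              fun hc => hz0P (P.support_takeUntil_subset hx hc)
            exact (hDreach z0 (P.takeUntil x hx)
              (fun s hs => P.edges_takeUntil_subset hx hs) hz0nsup).symm
  have hle : B.Le B' := ⟨Set.subset_union_left, Set.subset_union_left⟩
  have hfin := hB.2.2 B' hle hB'conn hB'ncut
  obtain ⟨z, hzP, hzB⟩ := hintz
  exact hzB (hfin.1 (Or.inr hzP))

lemma ASet_reach {B : G.Subgraph} {u w : G.V} (hw : w ∈ ASet B u) :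
    (G.eAdj (G.indE (ASet B u))).Reachable u w := by
  obtain ⟨p, hp⟩ := hw
  apply reach_of_walk_edges p
  intro x y hxy
  obtain ⟨e, he⟩ := p.adj_of_mem_edges hxy
  refine ⟨e, ?_, he⟩
  intro z hz
  rcases mem_ends_of_eq he hz with rfl | rfl
  · exact ASet_of_walk hp (p.fst_mem_support_of_mem_edges hxy)
  · exact ASet_of_walk hp (p.snd_mem_support_of_mem_edges hxy)

lemma ASet_disjoint {B : G.Subgraph} (hB : B.IsBlock) {u u' : G.V} (hu : u ∈ B.verts)
    (hu' : u' ∈ B.verts) (hne : u ≠ u') {w : G.V} (h1 : w ∈ ASet B u) (h2 : w ∈ ASet B u') :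
    False := by
  obtain ⟨p, hp⟩ := h1
  obtain ⟨q, hq⟩ := h2
  refine earcore hB hu hu' hne (p.append q.reverse) ?_ ?_
  · intro x hx hxB
    rw [SimpleGraph.Walk.support_append, List.mem_append] at hx
    rcases hx with hx | hx
    · exact Or.inl (hp x hx hxB)
    · have hx2 : x ∈ q.reverse.support := List.mem_of_mem_tail hx
      rw [SimpleGraph.Walk.support_reverse, List.mem_reverse] at hx2
      exact Or.inr (hq x hx2 hxB)
  · intro hmem
    rw [SimpleGraph.Walk.edges_append, List.mem_append] at hmem
    rcases hmem with hmem | hmem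
    · have h3 : u' ∈ p.support := p.snd_mem_support_of_mem_edges hmem
      exact hne (hp u' h3 hu').symm
    · rw [SimpleGraph.Walk.edges_reverse, List.mem_reverse] at hmem
      have h3 : u ∈ q.support := q.fst_mem_support_of_mem_edges hmem
      exact hne (hq u h3 hu)

lemma edge_split {B : G.Subgraph} (hB : B.IsBlock) {u : G.V} (hu : u ∈ B.verts) {e : G.E}
    (he : u ∈ G.ends e) : (e ∈ B.edges ∧ e ∉ G.indE (ASet B u)) ∨
      (e ∉ B.edges ∧ e ∈ G.indE (ASet B u)) := by
  obtain ⟨w, hwne, hw⟩ := exists_other he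
  by_cases hwB : w ∈ B.verts
  · left
    have heB : e ∈ B.edges := hB.edge_mem (fun z hz => by
      rcases mem_ends_of_eq hw hz with rfl | rfl
      · exact hu
      · exact hwB)
    refine ⟨heB, fun hind => ?_⟩
    have hwA : w ∈ ASet B u := hind w (by rw [hw]; exact Sym2.mem_mk_right _ _)
    exact hwne (ASet_inter_verts hwA hwB)
  · right
    have henB : e ∉ B.edges := fun hmem =>
      hwB (B.ends_mem e hmem w (by rw [hw]; exact Sym2.mem_mk_right _ _))
    refine ⟨henB, fun z hz => ?_⟩
    rcases mem_ends_of_eq hw hz with hzz | hzz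
    · rw [hzz]; exact self_mem_ASet
    · rw [hzz]; exact ASet_extend self_mem_ASet (⟨e, hw⟩ : G.Adj u w) hwB

lemma degS_le_degree (S : Set G.V) (v : G.V) : G.degS S v ≤ G.degree v := by
  classical
  apply Finset.card_le_card
  intro e he
  simp only [SignedGraph.degS, SignedGraph.degree, Finset.mem_filter, Finset.mem_univ,
    true_and] at he ⊢
  exact he.2

lemma degree_split {B : G.Subgraph} (hB : B.IsBlock) {u : G.V} (hu : u ∈ B.verts) :
    G.degree u = B.degree u + G.degS (ASet B u) u := by
  classical
  have h1 : B.degree u = ((Finset.univ.filter (fun e : G.E => u ∈ G.ends e)).filter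
      (fun e => e ∈ B.edges)).card := by
    rw [Subgraph.degree]
    congr 1
    ext e
    simp only [Finset.mem_filter, Finset.mem_univ, true_and]
    tauto
  have h2 : G.degS (ASet B u) u = ((Finset.univ.filter (fun e : G.E => u ∈ G.ends e)).filter
      (fun e => ¬ e ∈ B.edges)).card := by
    rw [SignedGraph.degS]
    congr 1
    ext e
    simp only [Finset.mem_filter, Finset.mem_univ, true_and]
    constructor
    · rintro ⟨hA, hinc⟩
      refine ⟨hinc, ?_⟩
      rcases edge_split hB hu hinc with ⟨_, hnA⟩ | ⟨hnB, _⟩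
      · exact absurd hA hnA
      · exact hnB
    · rintro ⟨hinc, hnB⟩
      rcases edge_split hB hu hinc with ⟨hB1, _⟩ | ⟨_, hA⟩
      · exact absurd hB1 hnB
      · exact ⟨hA, hinc⟩
  rw [SignedGraph.degree, h1, h2, Finset.card_filter_add_card_filter_not]

lemma greedy : ∀ (n : ℕ) (L0 : G.V → Finset ℤ) (S : Set G.V), S.ncard = n →
    ∀ (u : G.V), u ∈ S →
    (∀ w ∈ S, (G.eAdj (G.indE S)).Reachable u w) →
    (∀ w ∈ S, w ≠ u → G.degS S w ≤ (L0 w).card) →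
    G.degS S u < (L0 u).card →
    ∃ φ : G.V → ℤ, G.IsColOn S φ ∧ ∀ w ∈ S, φ w ∈ L0 w := by
  intro n
  induction n using Nat.strong_induction_on with
  | _ n ih =>
  intro L0 S hn u hu hconn hsz hslack
  classical
  by_cases hS : ∃ w ∈ S, w ≠ u
  case neg =>
    have hSu : ∀ w ∈ S, w = u := by push_neg at hS; exact hS
    obtain ⟨c, hc⟩ : (L0 u).Nonempty :=
      Finset.card_pos.mp (lt_of_le_of_lt (Nat.zero_le _) hslack)
    refine ⟨fun _ => c, ?_, ?_⟩
    · intro e he x y hxy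
      exfalso
      have hx : x ∈ S := he x (by rw [hxy]; exact Sym2.mem_mk_left _ _)
      have hy : y ∈ S := he y (by rw [hxy]; exact Sym2.mem_mk_right _ _)
      have hxy2 : x = y := (hSu x hx).trans (hSu y hy).symm
      subst hxy2
      exact G.loopless e (by rw [hxy]; exact Sym2.mk_isDiag_iff.mpr rfl)
    · intro w hw; rw [hSu w hw]; exact hc
  case pos =>
  obtain ⟨w0, hw0S, hw0u⟩ := hS
  set GS := G.eAdj (G.indE S) with hGS
  obtain ⟨wm, hwmem, hwmax⟩ := Finset.exists_max_image
    ((S.toFinset).filter (fun x => x ≠ u)) (fun x => GS.dist u x)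
    ⟨w0, by simp [hw0S, hw0u]⟩
  rw [Finset.mem_filter, Set.mem_toFinset] at hwmem
  obtain ⟨hwS, hwu⟩ := hwmem
  set S' := S \ {wm} with hS'def
  have huS' : u ∈ S' := ⟨hu, by simp [Ne.symm hwu]⟩
  have hn' : S'.ncard < n := by
    rw [← hn]
    exact Set.ncard_diff_singleton_lt_of_mem hwS (Set.toFinite _)
  have hindE' : ∀ e : G.E, e ∈ G.indE S' ↔ e ∈ G.indE S ∧ wm ∉ G.ends e := by
    intro e
    constructor
    · intro h
      exact ⟨fun z hz => (h z hz).1, fun hwe => (h wm hwe).2 rfl⟩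
    · rintro ⟨h1, h2⟩ z hz
      exact ⟨h1 z hz, fun hzw => h2 (hzw ▸ hz)⟩
  have hdegsplit : ∀ z : G.V, G.degS S z = G.degS S' z + (Finset.univ.filter
      (fun e : G.E => e ∈ G.indE S ∧ z ∈ G.ends e ∧ wm ∈ G.ends e)).card := by
    intro z
    have h1 : (Finset.univ.filter (fun e : G.E => e ∈ G.indE S ∧ z ∈ G.ends e)).filter
        (fun e => wm ∈ G.ends e) = Finset.univ.filter
        (fun e : G.E => e ∈ G.indE S ∧ z ∈ G.ends e ∧ wm ∈ G.ends e) := by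
      ext e; simp only [Finset.mem_filter, Finset.mem_univ, true_and]; tauto
    have h2 : (Finset.univ.filter (fun e : G.E => e ∈ G.indE S ∧ z ∈ G.ends e)).filter
        (fun e => ¬ wm ∈ G.ends e) = Finset.univ.filter
        (fun e : G.E => e ∈ G.indE S' ∧ z ∈ G.ends e) := by
      ext e
      simp only [Finset.mem_filter, Finset.mem_univ, true_and, hindE']
      tauto
    have h3 := Finset.card_filter_add_card_filter_not
      (s := Finset.univ.filter (fun e : G.E => e ∈ G.indE S ∧ z ∈ G.ends e))
      (p := fun e : G.E => wm ∈ G.ends e)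
    rw [h1, h2] at h3
    rw [SignedGraph.degS, SignedGraph.degS]
    omega
  have hdegw : 1 ≤ G.degS S wm := by
    obtain ⟨p⟩ := hconn wm hwS
    have p' := p.reverse
    cases p' with
    | nil => exact absurd rfl hwu
    | @cons _ z _ hadj q =>
      obtain ⟨e, heS, hends⟩ := (hadj : (G.eAdj (G.indE S)).Adj wm z)
      refine Finset.card_pos.mpr ⟨e, ?_⟩
      simp only [SignedGraph.degS, Finset.mem_filter, Finset.mem_univ, true_and]
      exact ⟨heS, by rw [hends]; exact Sym2.mem_mk_left _ _⟩
  obtain ⟨c, hcL⟩ : (L0 wm).Nonempty :=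
    Finset.card_pos.mp (lt_of_lt_of_le hdegw (hsz wm hwS hwu))
  set forb : G.V → Finset ℤ := fun z => (Finset.univ.filter
      (fun e : G.E => e ∈ G.indE S ∧ z ∈ G.ends e ∧ wm ∈ G.ends e)).image
      (fun e => G.sign e * c) with hforbdef
  set L1 : G.V → Finset ℤ := fun z => L0 z \ forb z with hL1def
  have hL1card : ∀ z : G.V, (L0 z).card - (Finset.univ.filter
      (fun e : G.E => e ∈ G.indE S ∧ z ∈ G.ends e ∧ wm ∈ G.ends e)).card ≤ (L1 z).card := by
    intro z
    have hm : (forb z).card ≤ (Finset.univ.filter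
        (fun e : G.E => e ∈ G.indE S ∧ z ∈ G.ends e ∧ wm ∈ G.ends e)).card :=
      Finset.card_image_le
    have := Finset.le_card_sdiff (forb z) (L0 z)
    simp only [hL1def]
    omega
  have hconn' : ∀ x ∈ S', (G.eAdj (G.indE S')).Reachable u x := by
    rintro x ⟨hxS, hxw⟩
    simp only [Set.mem_singleton_iff] at hxw
    by_cases hxu : x = u
    · subst hxu; exact SimpleGraph.Reachable.refl _
    obtain ⟨p, hp⟩ := (hconn x hxS).exists_walk_length_eq_dist
    have hwp : wm ∉ p.support := by
      intro hwp
      have h1 : GS.dist u wm ≤ (p.takeUntil wm hwp).length := SimpleGraph.dist_le _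
      have h2 : (p.takeUntil wm hwp).length + (p.dropUntil wm hwp).length = p.length := by
        rw [← SimpleGraph.Walk.length_append, p.take_spec hwp]
      have h3 : (p.dropUntil wm hwp).length ≠ 0 := by
        intro h0
        exact hxw (SimpleGraph.Walk.eq_of_length_eq_zero h0).symm
      have h4 : GS.dist u x ≤ GS.dist u wm := hwmax x (by simp [hxS, hxu])
      omega
    refine reach_of_walk_edges p (G.indE S') (fun a b hab => ?_)
    obtain ⟨e, heS, hends⟩ := (p.adj_of_mem_edges hab : GS.Adj a b)
    refine ⟨e, ?_, hends⟩
    rw [hindE' e]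
    refine ⟨heS, fun hwe => ?_⟩
    rcases mem_ends_of_eq hends hwe with h | h
    · exact hwp (h ▸ p.fst_mem_support_of_mem_edges hab)
    · exact hwp (h ▸ p.snd_mem_support_of_mem_edges hab)
  obtain ⟨φ', hφ'col, hφ'mem⟩ := ih S'.ncard hn' L1 S' rfl u huS' hconn'
    (fun z hzS' hzu => by
      have ha := hdegsplit z
      have hb := hsz z hzS'.1 hzu
      have hc' := hL1card z
      omega)
    (by
      have ha := hdegsplit u
      have hc' := hL1card u
      omega)
  refine ⟨fun z => if z = wm then c else φ' z, ?_, ?_⟩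
  · intro e he x y hxy
    by_cases hwe : wm ∈ G.ends e
    · by_cases hxw2 : x = wm
      · by_cases hyw : y = wm
        · exfalso
          exact G.loopless e (by rw [hxy, hxw2, hyw]; exact Sym2.mk_isDiag_iff.mpr rfl)
        · simp only [if_pos hxw2, if_neg hyw]
          intro hcontra
          have hyS : y ∈ S := he y (by rw [hxy]; exact Sym2.mem_mk_right _ _)
          have hyS' : y ∈ S' := ⟨hyS, by simp [hyw]⟩
          have hmem := hφ'mem y hyS'
          have hforbmem : G.sign e * c ∈ forb y := Finset.mem_image.mpr ⟨e, by
            simp only [Finset.mem_filter, Finset.mem_univ, true_and]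
            exact ⟨he, (by rw [hxy]; exact Sym2.mem_mk_right _ _), hwe⟩, rfl⟩
          have heq : φ' y = G.sign e * c := by
            rcases G.sign_unit e with hs | hs
            · rw [hs] at hcontra ⊢; linarith
            · rw [hs] at hcontra ⊢; linarith
          exact (Finset.mem_sdiff.mp hmem).2 (heq ▸ hforbmem)
      · by_cases hyw : y = wm
        · simp only [if_neg hxw2, if_pos hyw]
          intro hcontra
          have hxS : x ∈ S := he x (by rw [hxy]; exact Sym2.mem_mk_left _ _)
          have hxS' : x ∈ S' := ⟨hxS, by simp [hxw2]⟩
          have hmem := hφ'mem x hxS'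
          have hforbmem : G.sign e * c ∈ forb x := Finset.mem_image.mpr ⟨e, by
            simp only [Finset.mem_filter, Finset.mem_univ, true_and]
            exact ⟨he, (by rw [hxy]; exact Sym2.mem_mk_left _ _), hwe⟩, rfl⟩
          exact (Finset.mem_sdiff.mp hmem).2 (hcontra ▸ hforbmem)
        · exfalso
          rcases mem_ends_of_eq hxy hwe with h | h
          · exact hxw2 h.symm
          · exact hyw h.symm
    · have he' : e ∈ G.indE S' := (hindE' e).mpr ⟨he, hwe⟩
      have hx : x ≠ wm := fun hh => hwe (hh ▸ (by rw [hxy]; exact Sym2.mem_mk_left _ _))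
      have hy : y ≠ wm := fun hh => hwe (hh ▸ (by rw [hxy]; exact Sym2.mem_mk_right _ _))
      simp only [if_neg hx, if_neg hy]
      exact hφ'col e he' x y hxy
  · intro z hz
    by_cases hzw : z = wm
    · subst hzw; simp only [if_pos rfl]; exact hcL
    · simp only [if_neg hzw]
      have hz' : z ∈ S' := ⟨hz, by simp [hzw]⟩
      exact Finset.sdiff_subset (hφ'mem z hz')

lemma card_fail_le (L : G.V → Finset ℤ) (S : Set G.V) (u : G.V) (hu : u ∈ S)
    (hconn : ∀ w ∈ S, (G.eAdj (G.indE S)).Reachable u w)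
    (hsz : ∀ w ∈ S, w ≠ u → G.degS S w ≤ (L w).card) :
    ((L u).filter (fun c => ¬ G.Ext L S u c)).card ≤ G.degS S u := by
  classical
  by_contra hcon
  push_neg at hcon
  obtain ⟨φ, hcol, hmem⟩ := greedy (G := G) S.ncard
    (fun z => if z = u then (L u).filter (fun c => ¬ G.Ext L S u c) else L z) S rfl u hu hconn
    (fun w hw hwu => by simp only [if_neg hwu]; exact hsz w hw hwu)
    (by simp only [if_pos rfl]; exact hcon)
  have hφu : φ u ∈ (L u).filter (fun c => ¬ G.Ext L S u c) := by
    have hh := hmem u hu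
    simpa using hh
  have hExt : G.Ext L S u (φ u) := by
    refine ⟨φ, hcol, fun w hw => ?_, rfl⟩
    have hh := hmem w hw
    by_cases hwu : w = u
    · subst hwu
      simp only [if_pos rfl] at hh
      exact Finset.mem_of_mem_filter _ hh
    · simpa only [if_neg hwu] using hh
  exact (Finset.mem_filter.mp hφu).2 hExt

/-- The list assigned to a block. -/
noncomputable def LBfun (G : SignedGraph) (L : G.V → Finset ℤ) (B : G.Subgraph) (v : G.V) :
    Finset ℤ := (L v).filter (fun c => G.Ext L (ASet B v) v c)

lemma block_uncolorable {L : G.V → Finset ℤ} (h : G.UncolorablePair L)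
    {B : G.Subgraph} (hB : B.IsBlock) :
    B.toSG.UncolorablePair (fun u => LBfun G L B u.1) := by
  classical
  obtain ⟨hGconn, hdeg, hnocol⟩ := h
  refine ⟨hB.1, ?_, ?_⟩
  · rintro ⟨u, hu⟩
    have hfail := card_fail_le L (ASet B u) u self_mem_ASet
      (fun w hw => ASet_reach hw)
      (fun w _ _ => le_trans (degS_le_degree _ _) (hdeg w))
    have hsplit := degree_split hB hu
    have hcards := Finset.card_filter_add_card_filter_not
      (s := L u) (p := fun c => G.Ext L (ASet B u) u c)
    have hdegu := hdeg u
    have htdeg : B.toSG.degree ⟨u, hu⟩ = B.degree u := toSG_degree ⟨u, hu⟩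
    show B.toSG.degree ⟨u, hu⟩ ≤ ((L u).filter (fun c => G.Ext L (ASet B u) u c)).card
    omega
  · rintro ⟨φ, hφcol, hφmem⟩
    have hBne : B.verts.Nonempty := ((toSG_connected_iff B).mp hB.1).1
    obtain ⟨b0, hb0⟩ := hBne
    have hGc : G.adjGraph.Connected := hGconn
    have hhost : ∀ z : G.V, ∃ u, u ∈ B.verts ∧ z ∈ ASet B u := by
      intro z
      by_cases hz : z ∈ B.verts
      · exact ⟨z, hz, self_mem_ASet⟩
      · obtain ⟨p⟩ := hGc.preconnected z b0
        obtain ⟨y, hyB, q, hqsup, hqlast⟩ := firstHit p hb0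
        refine ⟨y, hyB, ⟨q.reverse, ?_⟩⟩
        intro x hx hxB
        rw [SimpleGraph.Walk.support_reverse, List.mem_reverse] at hx
        exact hqlast x hx hxB
    choose uof huB huA using hhost
    have huniq : ∀ z, ∀ u ∈ B.verts, z ∈ ASet B u → u = uof z := by
      intro z u hu hz
      by_contra hne
      exact ASet_disjoint hB hu (huB z) hne hz (huA z)
    have hExtφ : ∀ u, ∀ hu : u ∈ B.verts, ∃ ψ : G.V → ℤ, G.IsColOn (ASet B u) ψ ∧
        (∀ w ∈ ASet B u, ψ w ∈ L w) ∧ ψ u = φ ⟨u, hu⟩ := by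
      intro u hu
      have hmem := hφmem ⟨u, hu⟩
      rw [show (fun u : B.toSG.V => LBfun G L B u.1) ⟨u, hu⟩ = LBfun G L B u from rfl,
        LBfun, Finset.mem_filter] at hmem
      obtain ⟨ψ, h1, h2, h3⟩ := hmem.2
      exact ⟨ψ, h1, h2, h3⟩
    choose ψf hψcol hψmem hψval using hExtφ
    set ψ' : G.V → G.V → ℤ := fun u => if h : u ∈ B.verts then ψf u h else fun _ => 0 with hψ'
    set Φ : G.V → ℤ := fun z => if h : z ∈ B.verts then φ ⟨z, h⟩ else ψ' (uof z) z with hΦ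
    have hΦB : ∀ (z) (hz : z ∈ B.verts), Φ z = φ ⟨z, hz⟩ := fun z hz => dif_pos hz
    have hψ'B : ∀ (u) (hu : u ∈ B.verts), ψ' u = ψf u hu := fun u hu => dif_pos hu
    have hagree : ∀ u, ∀ hu : u ∈ B.verts, ∀ z ∈ ASet B u, Φ z = ψ' u z := by
      intro u hu z hz
      by_cases hzB : z ∈ B.verts
      · have hzu : z = u := ASet_inter_verts hz hzB
        rw [hΦB z hzB, hψ'B u hu]
        subst hzu
        exact (hψval z hu).symm
      · rw [hΦ]
        simp only [dif_neg hzB]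
        rw [← huniq z u hu hz]
    apply hnocol
    refine ⟨Φ, ?_, ?_⟩
    · intro e x y hxy
      by_cases heB : e ∈ B.edges
      · have hx : x ∈ B.verts := B.ends_mem e heB x (by rw [hxy]; exact Sym2.mem_mk_left _ _)
        have hy : y ∈ B.verts := B.ends_mem e heB y (by rw [hxy]; exact Sym2.mem_mk_right _ _)
        rw [hΦB x hx, hΦB y hy]
        exact hφcol ⟨e, heB⟩ ⟨x, hx⟩ ⟨y, hy⟩ ((toSG_ends_iff ⟨e, heB⟩ ⟨x, hx⟩ ⟨y, hy⟩).mpr hxy)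
      · by_cases hxB : x ∈ B.verts
        · have hxe : x ∈ G.ends e := by rw [hxy]; exact Sym2.mem_mk_left _ _
          rcases edge_split hB hxB hxe with ⟨h1, _⟩ | ⟨_, hA⟩
          · exact absurd h1 heB
          have hyA : y ∈ ASet B x := hA y (by rw [hxy]; exact Sym2.mem_mk_right _ _)
          rw [hagree x hxB x self_mem_ASet, hagree x hxB y hyA, hψ'B x hxB]
          exact hψcol x hxB e hA x y hxy
        · by_cases hyB : y ∈ B.verts
          · have hye : y ∈ G.ends e := by rw [hxy]; exact Sym2.mem_mk_right _ _
            rcases edge_split hB hyB hye with ⟨h1, _⟩ | ⟨_, hA⟩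
            · exact absurd h1 heB
            have hxA : x ∈ ASet B y := hA x (by rw [hxy]; exact Sym2.mem_mk_left _ _)
            rw [hagree y hyB x hxA, hagree y hyB y self_mem_ASet, hψ'B y hyB]
            exact hψcol y hyB e hA x y hxy
          · have hxA : x ∈ ASet B (uof x) := huA x
            have hyA : y ∈ ASet B (uof x) := ASet_extend hxA (⟨e, hxy⟩ : G.Adj x y) hyB
            have hA : e ∈ G.indE (ASet B (uof x)) := by
              intro z hz
              rcases mem_ends_of_eq hxy hz with hzz | hzz
              · rw [hzz]; exact hxA
              · rw [hzz]; exact hyA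
            rw [hagree (uof x) (huB x) x hxA, hagree (uof x) (huB x) y hyA, hψ'B (uof x) (huB x)]
            exact hψcol (uof x) (huB x) e hA x y hxy
    · intro z
      by_cases hzB : z ∈ B.verts
      · rw [hΦB z hzB]
        have hh := hφmem ⟨z, hzB⟩
        rw [show (fun u : B.toSG.V => LBfun G L B u.1) ⟨z, hzB⟩ = LBfun G L B z from rfl,
          LBfun, Finset.mem_filter] at hh
        exact hh.1
      · rw [hΦ]
        simp only [dif_neg hzB]
        rw [hψ'B (uof z) (huB z)]
        exact hψmem (uof z) (huB z) z (huA z)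

lemma eAdj_support_prop (S : Set G.V) : ∀ {a b : G.V} (q : (G.eAdj (G.indE S)).Walk a b),
    a ∈ S → ∀ t ∈ q.support, t ∈ S := by
  intro a b q
  induction q with
  | nil =>
    intro ha t ht
    rw [SimpleGraph.Walk.support_nil, List.mem_singleton] at ht
    rw [ht]; exact ha
  | @cons a z b hadj q ih =>
    intro ha t ht
    obtain ⟨e, heS, hends⟩ := id (hadj : (G.eAdj (G.indE S)).Adj a z)
    have hz : z ∈ S := heS z (by rw [hends]; exact Sym2.mem_mk_right _ _)
    rw [SimpleGraph.Walk.support_cons, List.mem_cons] at ht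
    rcases ht with rfl | ht
    · exact ha
    · exact ih hz t ht

lemma boundary_vertex (v : G.V) : ∀ {a b : G.V} (p : G.adjGraph.Walk a b), b = v → a ≠ v →
    ∃ y, y ≠ v ∧ (∃ e : G.E, G.ends e = s(y, v)) ∧
      (G.eAdj (G.indE {x | x ≠ v})).Reachable a y := by
  intro a b p
  induction p with
  | nil => intro hb hav; exact absurd hb hav
  | @cons a z b hadj q ih =>
    intro hb hav
    by_cases hzv : z = v
    · refine ⟨a, hav, ?_, SimpleGraph.Reachable.refl _⟩
      obtain ⟨e, he⟩ := (hadj : G.Adj a z)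
      rw [hzv] at he
      exact ⟨e, he⟩
    · obtain ⟨y, h1, h2, h3⟩ := ih hb hzv
      refine ⟨y, h1, h2, ?_⟩
      obtain ⟨e, he⟩ := (hadj : G.Adj a z)
      have hadj' : (G.eAdj (G.indE {x | x ≠ v})).Adj a z := ⟨e, fun t ht => by
        rcases mem_ends_of_eq he ht with htt | htt
        · rw [htt]; exact hav
        · rw [htt]; exact hzv, he⟩
      exact hadj'.reachable.trans h3

lemma exists_block_for_color {L : G.V → Finset ℤ} (h : G.UncolorablePair L) (v : G.V) {c : ℤ}
    (hc : c ∈ L v) : ∃ B : G.Subgraph, B.IsBlock ∧ v ∈ B.verts ∧ c ∈ LBfun G L B v := by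
  classical
  obtain ⟨hGconn, hdeg, hnocol⟩ := h
  have hGc : G.adjGraph.Connected := hGconn
  by_cases hV : ∃ w : G.V, w ≠ v
  case neg =>
    exfalso
    push_neg at hV
    apply hnocol
    refine ⟨fun _ => c, ?_, fun w => by rw [hV w]; exact hc⟩
    intro e x y hxy
    exfalso
    exact G.loopless e (by rw [hxy, hV x, hV y]; exact Sym2.mk_isDiag_iff.mpr rfl)
  case pos =>
  set Gv := G.eAdj (G.indE {x | x ≠ v}) with hGv
  set Cset : G.V → Set G.V := fun z => {x | x ≠ v ∧ Gv.Reachable z x} with hCsetdef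
  have hCrefl : ∀ z, z ≠ v → z ∈ Cset z := fun z hz => ⟨hz, SimpleGraph.Reachable.refl _⟩
  have hCeq : ∀ {a b}, Gv.Reachable a b → Cset a = Cset b := by
    intro a b hab
    ext x
    exact ⟨fun ⟨h1, h2⟩ => ⟨h1, hab.symm.trans h2⟩, fun ⟨h1, h2⟩ => ⟨h1, hab.trans h2⟩⟩
  have hfailP : ∃ w, w ≠ v ∧ ¬ G.Ext L (Cset w ∪ {v}) v c := by
    by_contra hall
    push_neg at hall
    apply hnocol
    set F : Set G.V → (G.V → ℤ) := fun S => if hS : ∃ ψ : G.V → ℤ, G.IsColOn (S ∪ {v}) ψ ∧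
        (∀ x ∈ S ∪ {v}, ψ x ∈ L x) ∧ ψ v = c then hS.choose else fun _ => 0 with hF
    have hFspec : ∀ w, w ≠ v → G.IsColOn (Cset w ∪ {v}) (F (Cset w)) ∧
        (∀ x ∈ Cset w ∪ {v}, F (Cset w) x ∈ L x) ∧ F (Cset w) v = c := by
      intro w hw
      have hex : ∃ ψ : G.V → ℤ, G.IsColOn (Cset w ∪ {v}) ψ ∧
          (∀ x ∈ Cset w ∪ {v}, ψ x ∈ L x) ∧ ψ v = c := hall w hw
      simp only [hF]
      rw [dif_pos hex]
      exact hex.choose_spec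
    set Φ : G.V → ℤ := fun z => if z = v then c else F (Cset z) z with hΦ
    have hΦdef : ∀ z, Φ z = if z = v then c else F (Cset z) z := fun z => rfl
    refine ⟨Φ, ?_, ?_⟩
    · intro e x y hxy
      by_cases hve : v ∈ G.ends e
      · by_cases hxv : x = v
        · by_cases hyv : y = v
          · exfalso
            exact G.loopless e (by rw [hxy, hxv, hyv]; exact Sym2.mk_isDiag_iff.mpr rfl)
          · obtain ⟨hcol', hmem', hval'⟩ := hFspec y hyv
            have hee : e ∈ G.indE (Cset y ∪ {v}) := by
              intro z hz
              rcases mem_ends_of_eq hxy hz with hzz | hzz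
              · rw [hzz, hxv]; exact Or.inr rfl
              · rw [hzz]; exact Or.inl (hCrefl y hyv)
            have h1 := hcol' e hee x y hxy
            have hΦx : Φ x = F (Cset y) x := by
              rw [hΦdef x, if_pos hxv, hxv, hval']
            have hΦy : Φ y = F (Cset y) y := by rw [hΦdef y, if_neg hyv]
            rw [hΦx, hΦy]; exact h1
        · by_cases hyv : y = v
          · obtain ⟨hcol', hmem', hval'⟩ := hFspec x hxv
            have hee : e ∈ G.indE (Cset x ∪ {v}) := by
              intro z hz
              rcases mem_ends_of_eq hxy hz with hzz | hzz
              · rw [hzz]; exact Or.inl (hCrefl x hxv)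
              · rw [hzz, hyv]; exact Or.inr rfl
            have h1 := hcol' e hee x y hxy
            have hΦx : Φ x = F (Cset x) x := by rw [hΦdef x, if_neg hxv]
            have hΦy : Φ y = F (Cset x) y := by
              rw [hΦdef y, if_pos hyv, hyv, hval']
            rw [hΦx, hΦy]; exact h1
          · exfalso
            rcases mem_ends_of_eq hxy hve with hh | hh
            · exact hxv hh.symm
            · exact hyv hh.symm
      · have hxv : x ≠ v := fun hh => hve (by rw [hxy, hh]; exact Sym2.mem_mk_left _ _)
        have hyv : y ≠ v := fun hh => hve (by rw [hxy, hh]; exact Sym2.mem_mk_right _ _)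
        have hadj : Gv.Adj x y := ⟨e, fun z hz => by
          rcases mem_ends_of_eq hxy hz with hzz | hzz
          · rw [hzz]; exact hxv
          · rw [hzz]; exact hyv, hxy⟩
        have hCxy : Cset x = Cset y := hCeq hadj.reachable
        obtain ⟨hcol', hmem', hval'⟩ := hFspec x hxv
        have hee : e ∈ G.indE (Cset x ∪ {v}) := by
          intro z hz
          rcases mem_ends_of_eq hxy hz with hzz | hzz
          · rw [hzz]; exact Or.inl (hCrefl x hxv)
          · rw [hzz]; exact Or.inl (by rw [hCxy]; exact hCrefl y hyv)
        have h1 := hcol' e hee x y hxy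
        have hΦx : Φ x = F (Cset x) x := by rw [hΦdef x, if_neg hxv]
        have hΦy : Φ y = F (Cset x) y := by rw [hΦdef y, if_neg hyv, hCxy]
        rw [hΦx, hΦy]; exact h1
    · intro z
      by_cases hzv : z = v
      · rw [hΦdef z, if_pos hzv, hzv]; exact hc
      · rw [hΦdef z, if_neg hzv]
        exact (hFspec z hzv).2.1 z (Or.inl (hCrefl z hzv))
  obtain ⟨w, hwv, hPfail⟩ := hfailP
  obtain ⟨p0⟩ := hGc.preconnected w v
  obtain ⟨y, hyv, ⟨e1, he1⟩, hwy⟩ := boundary_vertex v p0 rfl hwv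
  let H0 : G.Subgraph := ⟨{v, y}, {e1}, by
    intro e he z hz
    rw [Set.mem_singleton_iff] at he
    subst he
    rcases mem_ends_of_eq he1 hz with hzz | hzz
    · rw [hzz]; exact Or.inr rfl
    · rw [hzz]; exact Or.inl rfl⟩
  have hH0conn : H0.toSG.Connected := by
    rw [toSG_connected_iff]
    refine ⟨⟨v, Or.inl rfl⟩, ?_⟩
    have hadj : (G.eAdj H0.edges).Adj y v := ⟨e1, rfl, he1⟩
    have key : ∀ t, t ∈ H0.verts → (G.eAdj H0.edges).Reachable t v := by
      intro t ht
      rcases ht with ht | ht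
      · rw [ht]
      · rw [ht]; exact hadj.reachable
    intro a ha b hb
    exact (key a ha).trans (key b hb).symm
  have hH0ncut : ∀ z, ¬ H0.IsCutVertex z := by
    rintro z ⟨hzm, hzne, hznc⟩
    apply hznc
    rw [toSG_connected_iff]
    refine ⟨hzne, ?_⟩
    intro a ha b hb
    obtain ⟨ha1, ha2⟩ := ha
    obtain ⟨hb1, hb2⟩ := hb
    rw [Set.mem_singleton_iff] at ha2 hb2
    have hab : a = b := by
      rcases hzm with hz | hz
      · rcases ha1 with h1 | h1 <;> rcases hb1 with h2 | h2 <;> simp_all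
      · rw [Set.mem_singleton_iff] at hz
        rcases ha1 with h1 | h1 <;> rcases hb1 with h2 | h2 <;> simp_all
    rw [hab]
  obtain ⟨B, hB, hle⟩ := exists_block_ge H0 hH0conn hH0ncut
  have hvB : v ∈ B.verts := hle.1 (Or.inl rfl)
  have hyB : y ∈ B.verts := hle.1 (Or.inr rfl)
  have hCdisj : ∀ z ∈ Cset w, z ∉ ASet B v := by
    rintro z ⟨hzv, hrz⟩ hzA
    obtain ⟨pA, hpA⟩ := hzA
    obtain ⟨q0⟩ := hrz.symm.trans hwy
    have hq1 : ∀ s ∈ q0.edges, s ∈ G.adjGraph.edgeSet := fun s hs =>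
      SimpleGraph.edgeSet_mono (eAdj_le_adjGraph _) (q0.edges_subset_edgeSet hs)
    obtain ⟨y2, hy2B, q2, hq2sup, hq2last⟩ := firstHit (q0.transfer G.adjGraph hq1) hyB
    have hq2v : ∀ t ∈ q2.support, t ≠ v := by
      intro t ht
      have h1 := hq2sup t ht
      rw [SimpleGraph.Walk.support_transfer] at h1
      exact eAdj_support_prop _ q0 hzv t h1
    have hy2v : y2 ≠ v := hq2v y2 q2.end_mem_support
    refine earcore hB hvB hy2B (Ne.symm hy2v) (pA.append q2) ?_ ?_
    · intro t ht htB
      rw [SimpleGraph.Walk.support_append, List.mem_append] at ht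
      rcases ht with ht | ht
      · exact Or.inl (hpA t ht htB)
      · exact Or.inr (hq2last t (List.mem_of_mem_tail ht) htB)
    · intro hmem
      rw [SimpleGraph.Walk.edges_append, List.mem_append] at hmem
      rcases hmem with hmem | hmem
      · have h1 : y2 ∈ pA.support := pA.snd_mem_support_of_mem_edges hmem
        exact hy2v (hpA y2 h1 hy2B)
      · have h1 : v ∈ q2.support := q2.fst_mem_support_of_mem_edges hmem
        exact hq2v v h1 rfl
  set A := ASet B v with hAdef
  set R : Set G.V := {x | x ∈ A → x = v} with hRdef
  have hvA : v ∈ A := self_mem_ASet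
  have hvR : v ∈ R := fun _ => rfl
  have hAR : ∀ x, x ∈ A → x ∈ R → x = v := fun x hx hxR => hxR hx
  have hBR : ∀ x ∈ B.verts, x ∈ R := fun x hx hxA => ASet_inter_verts hxA hx
  have hcovered : ∀ e : G.E, e ∈ G.indE A ∨ e ∈ G.indE R := by
    intro e
    by_cases hin : e ∈ G.indE A
    · exact Or.inl hin
    · right
      have hin' : ¬ ∀ z ∈ G.ends e, z ∈ A := hin
      push_neg at hin'
      obtain ⟨x0, hx0e, hx0A⟩ := hin'
      intro z hz hzA
      by_contra hzv
      obtain ⟨x', hx'ne, hx'⟩ := exists_other hz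
      have hx0x' : x0 = x' := by
        rcases mem_ends_of_eq hx' hx0e with hh | hh
        · exfalso; rw [hh] at hx0A; exact hx0A hzA
        · exact hh
      rw [hx0x'] at hx0A
      by_cases hx'B : x' ∈ B.verts
      · by_cases hx'v : x' = v
        · rw [hx'v] at hx0A; exact hx0A hvA
        · have hzB : z ∉ B.verts := fun hh => hzv (ASet_inter_verts hzA hh)
          have hzA' : z ∈ ASet B x' := by
            refine ⟨SimpleGraph.Walk.cons (⟨e, hx'.trans Sym2.eq_swap⟩ : G.adjGraph.Adj x' z)
              SimpleGraph.Walk.nil, ?_⟩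
            intro t ht htB
            change t ∈ x' :: (SimpleGraph.Walk.nil : G.adjGraph.Walk z z).support at ht
            rcases List.mem_cons.mp ht with rfl | ht
            · rfl
            · rw [SimpleGraph.Walk.support_nil, List.mem_singleton] at ht
              rw [ht] at htB ⊢
              exact absurd htB hzB
          exact ASet_disjoint hB hvB hx'B (fun hh => hx'v hh.symm) hzA hzA'
      · exact hx0A (ASet_extend hzA (⟨e, hx'⟩ : G.Adj z x') hx'B)
  have hdisjAR : ∀ e : G.E, ¬ (e ∈ G.indE A ∧ e ∈ G.indE R) := by
    rintro e ⟨h1, h2⟩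
    have hrep : G.ends e = s((G.ends e).out.1, (G.ends e).out.2) := ((G.ends e).out_eq).symm
    have hm1 : (G.ends e).out.1 ∈ G.ends e := Sym2.out_fst_mem _
    have hm2 : (G.ends e).out.2 ∈ G.ends e := Sym2.out_snd_mem _
    have hv1 : (G.ends e).out.1 = v := hAR _ (h1 _ hm1) (h2 _ hm1)
    have hv2 : (G.ends e).out.2 = v := hAR _ (h1 _ hm2) (h2 _ hm2)
    exact G.loopless e (by rw [hrep, hv1, hv2]; exact Sym2.mk_isDiag_iff.mpr rfl)
  have hdegsum : G.degree v = G.degS A v + G.degS R v := by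
    have h1 : (Finset.univ.filter (fun e : G.E => v ∈ G.ends e)).filter
        (fun e => e ∈ G.indE A) = Finset.univ.filter
        (fun e : G.E => e ∈ G.indE A ∧ v ∈ G.ends e) := by
      ext e; simp only [Finset.mem_filter, Finset.mem_univ, true_and]; tauto
    have h2 : (Finset.univ.filter (fun e : G.E => v ∈ G.ends e)).filter
        (fun e => ¬ e ∈ G.indE A) = Finset.univ.filter
        (fun e : G.E => e ∈ G.indE R ∧ v ∈ G.ends e) := by
      ext e
      simp only [Finset.mem_filter, Finset.mem_univ, true_and]
      constructor
      · rintro ⟨hv1, hv2⟩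
        exact ⟨(hcovered e).resolve_left hv2, hv1⟩
      · rintro ⟨hv1, hv2⟩
        exact ⟨hv2, fun hA2 => hdisjAR e ⟨hA2, hv1⟩⟩
    have h3 := Finset.card_filter_add_card_filter_not
      (s := Finset.univ.filter (fun e : G.E => v ∈ G.ends e))
      (p := fun e : G.E => e ∈ G.indE A)
    rw [h1, h2] at h3
    rw [SignedGraph.degree, SignedGraph.degS, SignedGraph.degS]
    omega
  have hRconn : ∀ x ∈ R, (G.eAdj (G.indE R)).Reachable v x := by
    intro x hx
    by_cases hxv : x = v
    · rw [hxv]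
    · have hxA : x ∉ A := fun hh => hxv (hx hh)
      obtain ⟨p⟩ := hGc.preconnected x v
      obtain ⟨y3, hy3B, q, hqsup, hqlast⟩ := firstHit p hvB
      have hq'path : q.bypass.IsPath := q.bypass_isPath
      have hq'last : ∀ t ∈ q.bypass.support, t ∈ B.verts → t = y3 :=
        fun t ht => hqlast t (q.support_bypass_subset ht)
      have hsub : ∀ t ∈ q.bypass.support, t ∈ R := by
        intro t ht htA
        by_contra htv
        have htB : t ∉ B.verts := fun hh => htv (ASet_inter_verts htA hh)
        have hty3 : t ≠ y3 := fun hh => htB (hh ▸ hy3B)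
        have hy3nt : y3 ∉ (q.bypass.takeUntil t ht).support := path_prefix_avoid hq'path ht hty3
        have htkB : ∀ s ∈ (q.bypass.takeUntil t ht).support, s ∉ B.verts := by
          intro s hs hsB
          have hsy := hq'last s (q.bypass.support_takeUntil_subset ht hs) hsB
          exact hy3nt (hsy ▸ hs)
        obtain ⟨pt, hpt⟩ := htA
        have hxA' : x ∈ ASet B v := by
          refine ⟨pt.append (q.bypass.takeUntil t ht).reverse, ?_⟩
          intro s hs hsB
          rw [SimpleGraph.Walk.support_append, List.mem_append] at hs
          rcases hs with hs | hs
          · exact hpt s hs hsB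
          · exfalso
            have hs2 : s ∈ (q.bypass.takeUntil t ht).reverse.support := List.mem_of_mem_tail hs
            rw [SimpleGraph.Walk.support_reverse, List.mem_reverse] at hs2
            exact htkB s hs2 hsB
        exact hxA hxA'
      have hreach1 : (G.eAdj (G.indE R)).Reachable x y3 :=
        reach_of_walk_edges q.bypass (G.indE R) (fun a b hab => by
          obtain ⟨e, he⟩ := q.bypass.adj_of_mem_edges hab
          refine ⟨e, ?_, he⟩
          intro s hsz
          rcases mem_ends_of_eq he hsz with hh | hh
          · rw [hh]; exact hsub a (q.bypass.fst_mem_support_of_mem_edges hab)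
          · rw [hh]; exact hsub b (q.bypass.snd_mem_support_of_mem_edges hab))
      have hcB := hB.1
      rw [toSG_connected_iff] at hcB
      have hreach2 := (hcB.2 y3 hy3B v hvB).mono (eAdj_mono
        (fun e he s hs => hBR s (B.ends_mem e he s hs)))
      exact (hreach1.trans hreach2).symm
  have hKA := card_fail_le L A v hvA (fun w' hw' => ASet_reach hw')
    (fun w' _ _ => le_trans (degS_le_degree _ _) (hdeg w'))
  have hKR := card_fail_le L R v hvR hRconn
    (fun w' _ _ => le_trans (degS_le_degree _ _) (hdeg w'))
  have hcov2 : ∀ c' ∈ L v, ¬ G.Ext L A v c' ∨ ¬ G.Ext L R v c' := by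
    intro c' hc'
    by_contra hno
    push_neg at hno
    obtain ⟨hEA, hER⟩ := hno
    obtain ⟨φA, hA1, hA2, hA3⟩ := hEA
    obtain ⟨φR, hR1, hR2, hR3⟩ := hER
    apply hnocol
    refine ⟨fun z => if z ∈ A then φA z else φR z, ?_, ?_⟩
    · intro e x y hxy
      by_cases hin : e ∈ G.indE A
      · have hx : x ∈ A := hin x (by rw [hxy]; exact Sym2.mem_mk_left _ _)
        have hy : y ∈ A := hin y (by rw [hxy]; exact Sym2.mem_mk_right _ _)
        simp only [if_pos hx, if_pos hy]
        exact hA1 e hin x y hxy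
      · have hinR : e ∈ G.indE R := (hcovered e).resolve_left hin
        have hx : x ∈ R := hinR x (by rw [hxy]; exact Sym2.mem_mk_left _ _)
        have hy : y ∈ R := hinR y (by rw [hxy]; exact Sym2.mem_mk_right _ _)
        have hfx : (if x ∈ A then φA x else φR x) = φR x := by
          by_cases hxa : x ∈ A
          · rw [if_pos hxa]
            have hxv : x = v := hAR x hxa hx
            rw [hxv, hA3, ← hR3]
          · rw [if_neg hxa]
        have hfy : (if y ∈ A then φA y else φR y) = φR y := by
          by_cases hya : y ∈ A
          · rw [if_pos hya]
            have hyv : y = v := hAR y hya hy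
            rw [hyv, hA3, ← hR3]
          · rw [if_neg hya]
        simp only [hfx, hfy]
        exact hR1 e hinR x y hxy
    · intro z
      by_cases hza : z ∈ A
      · simp only [if_pos hza]; exact hA2 z hza
      · simp only [if_neg hza]
        exact hR2 z (fun hh => absurd hh hza)
  set KA := (L v).filter (fun c' => ¬ G.Ext L A v c') with hKAdef
  set KR := (L v).filter (fun c' => ¬ G.Ext L R v c') with hKRdef
  have hUnion : L v ⊆ KA ∪ KR := by
    intro c' hc'
    rcases hcov2 c' hc' with hcc | hcc
    · exact Finset.mem_union_left _ (Finset.mem_filter.mpr ⟨hc', hcc⟩)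
    · exact Finset.mem_union_right _ (Finset.mem_filter.mpr ⟨hc', hcc⟩)
  have hdeglv := hdeg v
  have hcardU : (L v).card ≤ (KA ∪ KR).card := Finset.card_le_card hUnion
  have hcardUle : (KA ∪ KR).card ≤ KA.card + KR.card := Finset.card_union_le _ _
  have hinter : KA ∩ KR = ∅ := by
    have h1 := Finset.card_union_add_card_inter KA KR
    have h0 : (KA ∩ KR).card = 0 := by omega
    exact Finset.card_eq_zero.mp h0
  have hsubR : Cset w ∪ {v} ⊆ R := by
    intro t ht
    rcases ht with ht | ht
    · exact fun htA => (hCdisj t ht htA).elim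
    · rw [Set.mem_singleton_iff] at ht
      rw [ht]; exact hvR
  have hcKR : c ∈ KR :=
    Finset.mem_filter.mpr ⟨hc, fun hExtR => hPfail (hExtR.mono hsubR)⟩
  have hcKA : c ∉ KA := by
    intro hh
    have hmm : c ∈ KA ∩ KR := Finset.mem_inter.mpr ⟨hh, hcKR⟩
    rw [hinter] at hmm
    exact absurd hmm (Finset.notMem_empty c)
  have hcExtA : G.Ext L A v c := by
    by_contra hnn
    exact hcKA (Finset.mem_filter.mpr ⟨hc, hnn⟩)
  exact ⟨B, hB, hvB, Finset.mem_filter.mpr ⟨hc, hcExtA⟩⟩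

end SignedGraph

/-- The lists of an uncolorable pair decompose over the blocks. -/
theorem uncolorablePair_block_decomposition (G : SignedGraph) (L : G.V → Finset ℤ)
    (h : G.UncolorablePair L) :
    ∃ LB : G.Subgraph → G.V → Finset ℤ,
      (∀ B : G.Subgraph, B.IsBlock → B.toSG.UncolorablePair (fun u => LB B u.1)) ∧
      ∀ v : G.V, (L v : Set ℤ) =
        ⋃ B ∈ {B : G.Subgraph | B.IsBlock ∧ v ∈ B.verts}, (LB B v : Set ℤ) := by
  classical
  refine ⟨fun B v => SignedGraph.LBfun G L B v, ?_, ?_⟩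
  · intro B hB
    exact SignedGraph.block_uncolorable h hB
  · intro v
    apply Set.eq_of_subset_of_subset
    · intro c hcv
      have hc : c ∈ L v := hcv
      obtain ⟨B, hB, hvB, hcB⟩ := SignedGraph.exists_block_for_color h v hc
      exact Set.mem_biUnion
        (show B ∈ {B : G.Subgraph | B.IsBlock ∧ v ∈ B.verts} from ⟨hB, hvB⟩) hcB
    · intro c hcv
      simp only [Set.mem_iUnion, exists_prop] at hcv
      obtain ⟨B, _, hcB⟩ := hcv
      have hcB' : c ∈ SignedGraph.LBfun G L B v := hcB
      exact Finset.mem_of_mem_filter _ hcB'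
end

section
/- Let k ≥ 4 be an integer and let T be a connected signed graph without multiple edges such that Δ(T) ≤ k − 1, every block of T is a brick, and T is not a balanced complete graph of order k. Then (k − 2 + 2/(k−1))·|V(T)| − 2·|E(T)| ≥ 2. -/
open scoped Classical

namespace GTB2

variable {V : Type} {G : SimpleGraph V}

/-- First crossing out of a set along a walk. -/
lemma exitGen {Cs S : Set V} {a b : V} (p : G.Walk a b)
    (hs : ∀ z ∈ p.support, z ∈ S) (ha : a ∈ Cs) (hb : b ∉ Cs) :
    ∃ x y, x ∈ Cs ∧ y ∉ Cs ∧ y ∈ S ∧ G.Adj x y ∧ x ∈ p.support ∧ y ∈ p.support := by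
  induction p with
  | nil => exact absurd ha hb
  | @cons u c w h q ih =>
    by_cases hc : c ∈ Cs
    · obtain ⟨x, y, h1, h2, h3, h4, h5, h6⟩ := ih (fun z hz => hs z (by simp [hz])) hc hb
      exact ⟨x, y, h1, h2, h3, h4, by simp [h5], by simp [h6]⟩
    · exact ⟨u, c, ha, hc, hs c (by simp), h, by simp, by simp⟩

/-- Escaping a `v`-pointed closed set forces passing through `v`. -/
lemma escape {Cs S : Set V} {v : V}
    (hCl : ∀ x ∈ Cs, ∀ y ∈ S, G.Adj x y → y ≠ v → y ∈ Cs)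
    {a b : V} (p : G.Walk a b) (hs : ∀ z ∈ p.support, z ∈ S)
    (ha : a ∈ Cs) (hb : b ∉ Cs) : v ∈ p.support := by
  obtain ⟨x, y, h1, h2, h3, h4, _, h6⟩ := exitGen p hs ha hb
  by_cases hyv : y = v
  · exact hyv ▸ h6
  · exact absurd (hCl x h1 y h3 h4 hyv) h2

/-- Exit edge into the point. -/
lemma exitAdj {Cs S : Set V} {v : V}
    (hCl : ∀ x ∈ Cs, ∀ y ∈ S, G.Adj x y → y ≠ v → y ∈ Cs)
    {a b : V} (p : G.Walk a b) (hs : ∀ z ∈ p.support, z ∈ S)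
    (ha : a ∈ Cs) (hb : b ∉ Cs) : ∃ x ∈ Cs, G.Adj x v := by
  obtain ⟨x, y, h1, h2, h3, h4, _, _⟩ := exitGen p hs ha hb
  by_cases hyv : y = v
  · exact ⟨x, h1, hyv ▸ h4⟩
  · exact absurd (hCl x h1 y h3 h4 hyv) h2

/-- Confinement: a walk avoiding `v` starting in a `v`-pointed closed set stays inside. -/
lemma confine {Cs S : Set V} {v : V}
    (hCl : ∀ x ∈ Cs, ∀ y ∈ S, G.Adj x y → y ≠ v → y ∈ Cs)
    {a b : V} (p : G.Walk a b) (hs : ∀ z ∈ p.support, z ∈ S)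
    (ha : a ∈ Cs) (hv : v ∉ p.support) : b ∈ Cs := by
  by_contra hb
  exact hv (escape hCl p hs ha hb)

/-- A vertex cannot lie strictly on both sides of `z` on a path. -/
lemma pathDup [DecidableEq V] {a b z v : V} (p : G.Walk a b) (hp : p.IsPath)
    (hz : z ∈ p.support) (h1 : v ∈ (p.takeUntil z hz).support)
    (h2 : v ∈ (p.dropUntil z hz).support) (hvz : v ≠ z) : False := by
  have hnd := hp.support_nodup
  rw [← SimpleGraph.Walk.take_spec p hz, SimpleGraph.Walk.support_append] at hnd
  rw [List.nodup_append] at hnd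
  have h2' : v ∈ (p.dropUntil z hz).support.tail := by
    have := (p.dropUntil z hz).support_eq_cons
    rw [this] at h2
    rcases List.mem_cons.1 h2 with h | h
    · exact absurd h hvz
    · exact h
  exact hnd.2.2 v h1 v h2' rfl

end GTB2
namespace GTB2

open SignedGraph

variable {T : SignedGraph}

lemma sym2_out_mk {α : Type*} (z : Sym2 α) : s(z.out.1, z.out.2) = z := by
  conv_rhs => rw [← z.out_eq]

lemma mem_ends_other {e : T.E} {v : T.V} (h : v ∈ T.ends e) :
    ∃ w, T.ends e = s(v, w) ∧ w ≠ v := by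
  obtain ⟨w, hw⟩ := Sym2.mem_iff_exists.1 h
  refine ⟨w, hw, fun hwv => T.loopless e ?_⟩
  rw [hw, hwv]
  exact Sym2.mk_isDiag_iff.mpr rfl

lemma adjGraph_adj {x y : T.V} : T.adjGraph.Adj x y ↔ ∃ e, T.ends e = s(x, y) := Iff.rfl

lemma toSG_ends_map {H : T.Subgraph} (e : H.toSG.E) :
    Sym2.map Subtype.val (H.toSG.ends e) = T.ends e.1 := by
  show Sym2.map Subtype.val s(_, _) = _
  rw [Sym2.map_pair_eq]
  exact sym2_out_mk _

lemma mem_toSG_ends {H : T.Subgraph} (e : H.toSG.E) (w : H.toSG.V) :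
    w ∈ H.toSG.ends e ↔ w.1 ∈ T.ends e.1 := by
  rw [← toSG_ends_map e]
  constructor
  · intro h; exact Sym2.mem_map.2 ⟨w, h, rfl⟩
  · intro h
    obtain ⟨a, ha, hav⟩ := Sym2.mem_map.1 h
    rwa [show a = w from Subtype.ext hav] at ha

lemma toSG_ends_eq {H : T.Subgraph} (e : H.toSG.E) {a b : H.toSG.V} :
    H.toSG.ends e = s(a, b) ↔ T.ends e.1 = s(a.1, b.1) := by
  constructor
  · intro h
    rw [← toSG_ends_map e, h]
    exact Sym2.map_pair_eq _ _ _
  · intro h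
    have hinj : Function.Injective (Sym2.map (Subtype.val : H.verts → T.V)) :=
      Sym2.map.injective Subtype.val_injective
    apply hinj
    rw [toSG_ends_map e, h]
    exact (Sym2.map_pair_eq _ _ _).symm

lemma toSG_adj {H : T.Subgraph} (a b : H.toSG.V) :
    H.toSG.Adj a b ↔ ∃ e ∈ H.edges, T.ends e = s(a.1, b.1) := by
  constructor
  · rintro ⟨e, he⟩
    exact ⟨e.1, e.2, (toSG_ends_eq e).1 he⟩
  · rintro ⟨e, he, h⟩
    exact ⟨⟨e, he⟩, (toSG_ends_eq ⟨e, he⟩).2 h⟩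

lemma toSG_simple (hs : T.SimpleUnderlying) (H : T.Subgraph) : H.toSG.SimpleUnderlying := by
  intro e f h
  apply Subtype.ext
  apply hs
  rw [← toSG_ends_map e, ← toSG_ends_map f, h]

/-- Set-level connectivity via ambient walks. -/
def ConnSet (T : SignedGraph) (S : Set T.V) : Prop :=
  S.Nonempty ∧ ∀ x ∈ S, ∀ y ∈ S, ∃ p : T.adjGraph.Walk x y, ∀ z ∈ p.support, z ∈ S

def IsFull (T : SignedGraph) (H : T.Subgraph) : Prop :=
  ∀ e : T.E, (∀ x ∈ T.ends e, x ∈ H.verts) → e ∈ H.edges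

lemma toSG_hom_walk {H : T.Subgraph} {a b : H.toSG.V} (p : H.toSG.adjGraph.Walk a b) :
    ∃ q : T.adjGraph.Walk a.1 b.1, ∀ z ∈ q.support, z ∈ H.verts := by
  refine ⟨p.map ⟨Subtype.val, fun {x y} h => ?_⟩, fun z hz => ?_⟩
  · obtain ⟨e, he, hh⟩ := (toSG_adj x y).1 h
    exact ⟨e, hh⟩
  · erw [SimpleGraph.Walk.support_map] at hz
    obtain ⟨w, _, rfl⟩ := List.mem_map.1 hz
    exact w.2

lemma connected_elim {H : T.Subgraph} (hc : H.toSG.Connected) :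
    H.verts.Nonempty ∧ ∀ x ∈ H.verts, ∀ y ∈ H.verts,
      ∃ q : T.adjGraph.Walk x y, ∀ z ∈ q.support, z ∈ H.verts := by
  constructor
  · obtain ⟨⟨x, hx⟩⟩ := hc.nonempty
    exact ⟨x, hx⟩
  · intro x hx y hy
    obtain ⟨p⟩ := hc.preconnected ⟨x, hx⟩ ⟨y, hy⟩
    exact toSG_hom_walk p

lemma reach_lift {H : T.Subgraph} (hFull : IsFull T H) {x y : T.V}
    (p : T.adjGraph.Walk x y) (hp : ∀ z ∈ p.support, z ∈ H.verts)
    (hx : x ∈ H.verts) (hy : y ∈ H.verts) :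
    H.toSG.adjGraph.Reachable ⟨x, hx⟩ ⟨y, hy⟩ := by
  induction p with
  | nil => exact SimpleGraph.Reachable.refl _
  | @cons u c w h q ih =>
    have hc : c ∈ H.verts := hp c (by simp)
    have hadj : H.toSG.adjGraph.Adj ⟨u, hx⟩ ⟨c, hc⟩ := by
      obtain ⟨e, he⟩ := h
      refine (toSG_adj _ _).2 ⟨e, hFull e ?_, he⟩
      intro z hz
      rw [he] at hz
      rcases Sym2.mem_iff.1 hz with rfl | rfl
      · exact hx
      · exact hc
    exact hadj.reachable.trans (ih (fun z hz => hp z (by simp [hz])) hc hy)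

lemma connected_intro {H : T.Subgraph} (hFull : IsFull T H) (h : ConnSet T H.verts) :
    H.toSG.Connected := by
  obtain ⟨⟨x0, hx0⟩, hconn⟩ := h
  haveI : Nonempty H.toSG.V := ⟨⟨x0, hx0⟩⟩
  refine SimpleGraph.Connected.mk ?_
  rintro ⟨x, hx⟩ ⟨y, hy⟩
  obtain ⟨p, hp⟩ := hconn x hx y hy
  exact reach_lift hFull p hp hx hy

lemma toSG_card_V (H : T.Subgraph) : Fintype.card H.toSG.V = H.verts.ncard := by
  rw [← Nat.card_eq_fintype_card]
  exact Nat.card_coe_set_eq _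

lemma toSG_card_E (H : T.Subgraph) : Fintype.card H.toSG.E = H.edges.ncard := by
  rw [← Nat.card_eq_fintype_card]
  exact Nat.card_coe_set_eq _

lemma toSG_degree (H : T.Subgraph) (w : H.toSG.V) :
    H.toSG.degree w = H.degree w.1 := by
  unfold SignedGraph.degree SignedGraph.Subgraph.degree
  refine Finset.card_bij' (fun e _ => e.1) (fun e he => ⟨e, by simp at he; exact he.1⟩)
    ?_ ?_ ?_ ?_
  · intro e he
    simp only [Finset.mem_filter, Finset.mem_univ, true_and] at he ⊢
    exact ⟨e.2, (mem_toSG_ends e w).1 he⟩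
  · intro e he
    simp only [Finset.mem_filter, Finset.mem_univ, true_and] at he
    exact Finset.mem_filter.2 ⟨Finset.mem_univ _, (mem_toSG_ends ⟨e, he.1⟩ w).2 he.2⟩
  · intro e _; rfl
  · intro e _; rfl

lemma subgraph_degree_le (H : T.Subgraph) (v : T.V) : H.degree v ≤ T.degree v := by
  unfold SignedGraph.degree SignedGraph.Subgraph.degree
  apply Finset.card_le_card
  intro e he
  simp only [Finset.mem_filter, Finset.mem_univ, true_and] at he ⊢
  exact he.2

end GTB2
namespace GTB2

open SignedGraph SimpleGraph

variable {T : SignedGraph}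

/-- `C` is a connected component of `S \ {v}` (relative to ambient vertex set `S`). -/
def IsCompIn (T : SignedGraph) (S : Set T.V) (v : T.V) (C : Set T.V) : Prop :=
  C ⊆ S ∧ v ∈ S ∧ v ∉ C ∧ C.Nonempty ∧
  (∀ x ∈ C, ∀ y ∈ C, ∃ p : T.adjGraph.Walk x y, ∀ z ∈ p.support, z ∈ C) ∧
  (∀ x ∈ C, ∀ y ∈ S, T.adjGraph.Adj x y → y ≠ v → y ∈ C)

/-- `w` is a cut vertex of the induced graph on `S`. -/
def CutIn (T : SignedGraph) (S : Set T.V) (w : T.V) : Prop :=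
  w ∈ S ∧ (S \ {w}).Nonempty ∧ ¬ ConnSet T (S \ {w})

/-- The invariant maintained along the induction: `X` is connected and every vertex
outside `X` lies in a global component attached to `X` at a single vertex. -/
def Inv (T : SignedGraph) (X : Set T.V) : Prop :=
  ConnSet T X ∧ ∀ z, z ∉ X →
    ∃ v C, v ∈ X ∧ IsCompIn T Set.univ v C ∧ z ∈ C ∧ C ∩ X = ∅

lemma notMem_of_inter_empty {C X : Set T.V} (h : C ∩ X = ∅) {a : T.V} (ha : a ∈ X) :
    a ∉ C := fun haC => by
  have : a ∈ C ∩ X := ⟨haC, ha⟩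
  rw [h] at this
  exact this

def compOf (T : SignedGraph) (S : Set T.V) (v x : T.V) : Set T.V :=
  {z | ∃ p : T.adjGraph.Walk x z, ∀ u ∈ p.support, u ∈ S ∧ u ≠ v}

lemma compOf_base {S : Set T.V} {v x : T.V} (hx : x ∈ S) (hxv : x ≠ v) :
    x ∈ compOf T S v x :=
  ⟨SimpleGraph.Walk.nil, by simp [hx, hxv]⟩

lemma mem_compOf_of_mem_support {S : Set T.V} {v x z : T.V} {y : T.V}
    (hy : y ∈ compOf T S v x) : ∀ p : T.adjGraph.Walk x y,
      (∀ u ∈ p.support, u ∈ S ∧ u ≠ v) → z ∈ p.support → z ∈ compOf T S v x := by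
  intro p hp hz
  exact ⟨p.takeUntil z hz, fun u hu => hp u (Walk.support_takeUntil_subset _ _ hu)⟩

lemma compOf_isComp {S : Set T.V} {v x : T.V} (hv : v ∈ S) (hx : x ∈ S) (hxv : x ≠ v) :
    IsCompIn T S v (compOf T S v x) := by
  refine ⟨?_, hv, ?_, ⟨x, compOf_base hx hxv⟩, ?_, ?_⟩
  · rintro z ⟨p, hp⟩
    exact (hp z p.end_mem_support).1
  · rintro ⟨p, hp⟩
    exact (hp v p.end_mem_support).2 rfl
  · rintro z₁ ⟨p₁, hp₁⟩ z₂ ⟨p₂, hp₂⟩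
    refine ⟨p₁.reverse.append p₂, fun z hz => ?_⟩
    rcases (Walk.mem_support_append_iff _ _).1 hz with h | h
    · rw [Walk.support_reverse, List.mem_reverse] at h
      exact mem_compOf_of_mem_support ⟨p₁, hp₁⟩ p₁ hp₁ h
    · exact mem_compOf_of_mem_support ⟨p₂, hp₂⟩ p₂ hp₂ h
  · rintro z ⟨p, hp⟩ y hyS hadj hyv
    refine ⟨p.concat hadj, fun u hu => ?_⟩
    rw [Walk.support_concat, List.mem_append] at hu
    rcases hu with h | h
    · exact hp u h
    · rw [List.mem_singleton] at h
      exact h ▸ ⟨hyS, hyv⟩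

lemma cut_comps {S : Set T.V} {w : T.V} (hw : CutIn T S w) :
    ∃ C₁ C₂, IsCompIn T S w C₁ ∧ IsCompIn T S w C₂ ∧ C₁ ∩ C₂ = ∅ := by
  obtain ⟨hwS, hne, hnc⟩ := hw
  have hxy : ∃ x ∈ S \ {w}, ∃ y ∈ S \ {w},
      ∀ p : T.adjGraph.Walk x y, ¬ ∀ z ∈ p.support, z ∈ S \ {w} := by
    by_contra hcon
    push_neg at hcon
    exact hnc ⟨hne, fun x hx y hy => hcon x hx y hy⟩
  obtain ⟨x, hx, y, hy, hsep⟩ := hxy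
  refine ⟨compOf T S w x, compOf T S w y,
    compOf_isComp hwS hx.1 hx.2, compOf_isComp hwS hy.1 hy.2, ?_⟩
  ext z
  simp only [Set.mem_inter_iff, Set.mem_empty_iff_false, iff_false, not_and]
  rintro ⟨p₁, hp₁⟩ ⟨p₂, hp₂⟩
  refine hsep (p₁.append p₂.reverse) (fun u hu => ?_)
  rcases (Walk.mem_support_append_iff _ _).1 hu with h | h
  · exact ⟨(hp₁ u h).1, (hp₁ u h).2⟩
  · rw [Walk.support_reverse, List.mem_reverse] at h
    exact ⟨(hp₂ u h).1, (hp₂ u h).2⟩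

/-- A path between vertices of `X` stays in `X`. -/
lemma path_stays {X : Set T.V} (hInv : Inv T X) {a b : T.V} (p : T.adjGraph.Walk a b)
    (hp : p.IsPath) (ha : a ∈ X) (hb : b ∈ X) : ∀ z ∈ p.support, z ∈ X := by
  intro z hz
  by_contra hzX
  obtain ⟨vz, D, hvzX, hD, hzD, hDX⟩ := hInv.2 z hzX
  have hcl := hD.2.2.2.2.2
  have h1 : vz ∈ (p.takeUntil z hz).support := by
    have := escape (fun x hx y _ => hcl x hx y (Set.mem_univ y))
      (p.takeUntil z hz).reverse (fun _ _ => Set.mem_univ _) hzD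
      (notMem_of_inter_empty hDX ha)
    rwa [Walk.support_reverse, List.mem_reverse] at this
  have h2 : vz ∈ (p.dropUntil z hz).support :=
    escape (fun x hx y _ => hcl x hx y (Set.mem_univ y))
      (p.dropUntil z hz) (fun _ _ => Set.mem_univ _) hzD
      (notMem_of_inter_empty hDX hb)
  exact pathDup p hp hz h1 h2 (fun h => hzX (h ▸ hvzX))

/-- Key confinement: a path inside `S' ⊆ X` with both endpoints in `C ∪ {v'}`
stays in `C ∪ {v'}`, where `C` is a component of `X - v'`. -/
lemma confineBv {X C : Set T.V} {v' : T.V} (hcomp : IsCompIn T X v' C)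
    {S' : Set T.V} (hS'X : S' ⊆ X) {a b : T.V} (p : T.adjGraph.Walk a b) (hp : p.IsPath)
    (hsupp : ∀ z ∈ p.support, z ∈ S') (ha : a ∈ C ∪ {v'}) (hb : b ∈ C ∪ {v'}) :
    ∀ z ∈ p.support, z ∈ C ∪ {v'} := by
  intro z hz
  by_contra hzB
  have hcl := hcomp.2.2.2.2.2
  have hzC : z ∉ C := fun h => hzB (Or.inl h)
  have hzv : v' ≠ z := fun h => hzB (h ▸ Or.inr rfl)
  have h1 : v' ∈ (p.takeUntil z hz).support := by
    rcases ha with haC | haV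
    · exact escape hcl (p.takeUntil z hz)
        (fun u hu => hS'X (hsupp u (Walk.support_takeUntil_subset _ _ hu))) haC hzC
    · rw [Set.mem_singleton_iff] at haV
      exact haV ▸ (p.takeUntil z hz).start_mem_support
  have h2 : v' ∈ (p.dropUntil z hz).support := by
    rcases hb with hbC | hbV
    · have := escape hcl (p.dropUntil z hz).reverse
        (fun u hu => by
          rw [Walk.support_reverse, List.mem_reverse] at hu
          exact hS'X (hsupp u (Walk.support_dropUntil_subset _ _ hu))) hbC hzC
      rwa [Walk.support_reverse, List.mem_reverse] at this
    · rw [Set.mem_singleton_iff] at hbV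
      exact hbV ▸ (p.dropUntil z hz).end_mem_support
  exact pathDup p hp hz h1 h2 hzv

/-- Connectivity of the complement of a component. -/
lemma compl_conn {X C : Set T.V} {v' : T.V} (hX : ConnSet T X)
    (hcomp : IsCompIn T X v' C) : ConnSet T (X \ C) := by
  have hv' : v' ∈ X \ C := ⟨hcomp.2.1, hcomp.2.2.1⟩
  have key : ∀ x ∈ X \ C, ∃ p : T.adjGraph.Walk x v', ∀ z ∈ p.support, z ∈ X \ C := by
    intro x hx
    obtain ⟨p0, hp0⟩ := hX.2 x hx.1 v' hcomp.2.1
    have hsub := p0.support_toPath_subset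
    have hsX : ∀ z ∈ (p0.toPath : T.adjGraph.Walk x v').support, z ∈ X :=
      fun z hz => hp0 z (hsub hz)
    refine ⟨p0.toPath, fun z hz => ⟨hsX z hz, ?_⟩⟩
    by_contra hzC
    have hcl := hcomp.2.2.2.2.2
    have h1 : v' ∈ ((p0.toPath : T.adjGraph.Walk x v').takeUntil z hz).support := by
      have := escape hcl ((p0.toPath : T.adjGraph.Walk x v').takeUntil z hz).reverse
        (fun u hu => by
          rw [Walk.support_reverse, List.mem_reverse] at hu
          exact hsX u (Walk.support_takeUntil_subset _ _ hu)) hzC hx.2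
      rwa [Walk.support_reverse, List.mem_reverse] at this
    have h2 : v' ∈ ((p0.toPath : T.adjGraph.Walk x v').dropUntil z hz).support :=
      ((p0.toPath : T.adjGraph.Walk x v').dropUntil z hz).end_mem_support
    exact pathDup _ (p0.toPath.2) hz h1 h2 (fun h => hcomp.2.2.1 (h ▸ hzC))
  refine ⟨⟨v', hv'⟩, fun x hx y hy => ?_⟩
  obtain ⟨p, hp⟩ := key x hx
  obtain ⟨q, hq⟩ := key y hy
  refine ⟨p.append q.reverse, fun z hz => ?_⟩
  rcases (Walk.mem_support_append_iff _ _).1 hz with h | h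
  · exact hp z h
  · rw [Walk.support_reverse, List.mem_reverse] at h
    exact hq z h

end GTB2
namespace GTB2

open SignedGraph SimpleGraph

variable {T : SignedGraph}

lemma ends_pair (H : SignedGraph) (e : H.E) : ∃ x y, H.ends e = s(x, y) ∧ x ≠ y := by
  refine ⟨(H.ends e).out.1, (H.ends e).out.2, (sym2_out_mk _).symm, fun hxy => H.loopless e ?_⟩
  rw [← sym2_out_mk (H.ends e), hxy]
  exact Sym2.mk_isDiag_iff.mpr rfl

lemma handshake (H : SignedGraph) : ∑ v : H.V, H.degree v = 2 * Fintype.card H.E := by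
  unfold SignedGraph.degree
  rw [Finset.sum_congr rfl (fun v _ => Finset.card_filter _ _), Finset.sum_comm]
  have key : ∀ e : H.E, (∑ v : H.V, if v ∈ H.ends e then 1 else 0) = 2 := by
    intro e
    obtain ⟨x, y, hxy, hne⟩ := ends_pair H e
    rw [← Finset.card_filter]
    have : Finset.univ.filter (fun v : H.V => v ∈ H.ends e) = {x, y} := by
      ext v
      simp [hxy, Sym2.mem_iff]
    rw [this, Finset.card_insert_of_notMem (by simp [hne]), Finset.card_singleton]
  rw [Finset.sum_congr rfl (fun e _ => key e), Finset.sum_const, Finset.card_univ,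
    smul_eq_mul, mul_comm]

lemma complete_degree {H : SignedGraph} (hs : H.SimpleUnderlying)
    (hcompl : ∀ v w : H.V, v ≠ w → H.Adj v w) (v : H.V) :
    H.degree v = Fintype.card H.V - 1 := by
  have hmo : ∀ {e : H.E} (h : v ∈ H.ends e), ∃ w, H.ends e = s(v, w) ∧ w ≠ v :=
    fun h => mem_ends_other (T := H) h
  let f : {e : H.E // v ∈ H.ends e} → {w : H.V // w ≠ v} :=
    fun e => ⟨(hmo e.2).choose, (hmo e.2).choose_spec.2⟩
  have hf : ∀ e : {e : H.E // v ∈ H.ends e}, H.ends e.1 = s(v, (f e).1) :=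
    fun e => (hmo e.2).choose_spec.1
  have hbij : Function.Bijective f := by
    constructor
    · intro e₁ e₂ h
      apply Subtype.ext
      apply hs
      rw [hf e₁, hf e₂, h]
    · rintro ⟨w, hw⟩
      obtain ⟨e, he⟩ := hcompl v w (Ne.symm hw)
      have hv : v ∈ H.ends e := by rw [he]; exact Sym2.mem_iff.2 (Or.inl rfl)
      refine ⟨⟨e, hv⟩, ?_⟩
      have := hf ⟨e, hv⟩
      rw [he] at this
      apply Subtype.ext
      rcases Sym2.eq_iff.1 this with ⟨_, h⟩ | ⟨h1, h2⟩
      · exact h.symm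
      · exact absurd h1.symm (f ⟨e, hv⟩).2
  have hcard : Fintype.card {e : H.E // v ∈ H.ends e} = Fintype.card {w : H.V // w ≠ v} :=
    Fintype.card_congr (Equiv.ofBijective f hbij)
  have h1 : H.degree v = Fintype.card {e : H.E // v ∈ H.ends e} :=
    (Fintype.card_subtype _).symm
  have h2 : Fintype.card {w : H.V // w ≠ v} = Fintype.card H.V - 1 := by
    rw [Fintype.card_subtype_compl (· = v), Fintype.card_subtype_eq]
  omega
  
lemma cycle_card3 {H : SignedGraph} (hs : H.SimpleUnderlying)
    (hdeg2 : ∀ v : H.V, H.degree v = 2) (hne : Nonempty H.V) :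
    3 ≤ Fintype.card H.V := by
  obtain ⟨v⟩ := hne
  have h2 : (Finset.univ.filter (fun e : H.E => v ∈ H.ends e)).card = 2 := hdeg2 v
  have h1lt : 1 < (Finset.univ.filter (fun e : H.E => v ∈ H.ends e)).card := by omega
  obtain ⟨e₁, he₁, e₂, he₂, hne12⟩ := Finset.one_lt_card.1 h1lt
  rw [Finset.mem_filter] at he₁ he₂
  obtain ⟨a, ha, hav⟩ := mem_ends_other (T := H) he₁.2
  obtain ⟨b, hb, hbv⟩ := mem_ends_other (T := H) he₂.2
  have hab : a ≠ b := by
    intro h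
    exact hne12 (hs e₁ e₂ (by rw [ha, hb, h]))
  have h3 : ({v, a, b} : Finset H.V).card = 3 := by
    rw [Finset.card_insert_of_notMem (by simp [Ne.symm hav, Ne.symm hbv]),
      Finset.card_insert_of_notMem (by simp [hab]), Finset.card_singleton]
  calc 3 = ({v, a, b} : Finset H.V).card := h3.symm
    _ ≤ Finset.univ.card := Finset.card_le_univ _
    _ = Fintype.card H.V := Finset.card_univ

lemma cycle_edges {H : SignedGraph} (hdeg2 : ∀ v : H.V, H.degree v = 2) :
    Fintype.card H.E = Fintype.card H.V := by
  have h := handshake H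
  have h2 : ∑ v : H.V, H.degree v = Fintype.card H.V * 2 := by
    simp [hdeg2, Finset.sum_const, Finset.card_univ, mul_comm]
  omega

lemma doubled_absurd {H : SignedGraph} (hs : H.SimpleUnderlying) (hd : H.Doubled)
    (e : H.E) : False := by
  obtain ⟨x, y, hxy, _⟩ := ends_pair H e
  obtain ⟨f, hfe, hf, _, _⟩ := hd e x y hxy
  exact hfe (hs f e (hf.trans hxy.symm))

/-- The combinatorial data of a brick with simple underlying graph. -/
lemma brick_data {H : SignedGraph} (hbrick : H.IsBrick) (hs : H.SimpleUnderlying) :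
    (H.IsBalancedComplete ∧ (∀ v : H.V, H.degree v = Fintype.card H.V - 1) ∧
       2 * Fintype.card H.E = Fintype.card H.V * (Fintype.card H.V - 1))
    ∨ ((∀ v : H.V, H.degree v = 2) ∧ Fintype.card H.E = Fintype.card H.V ∧
       3 ≤ Fintype.card H.V) := by
  have cyc : H.IsCycleGraph → (∀ v : H.V, H.degree v = 2) ∧
      Fintype.card H.E = Fintype.card H.V ∧ 3 ≤ Fintype.card H.V := by
    rintro ⟨hconn, hsim, hdeg2⟩
    exact ⟨hdeg2, cycle_edges hdeg2, cycle_card3 hsim hdeg2 hconn.nonempty⟩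
  rcases hbrick with hc | hc | hc | hc | hc
  · refine Or.inl ⟨hc, fun v => complete_degree hc.1.1 hc.1.2 v, ?_⟩
    have h := handshake H
    have h2 : ∑ v : H.V, H.degree v = Fintype.card H.V * (Fintype.card H.V - 1) := by
      simp [complete_degree hc.1.1 hc.1.2, Finset.sum_const, Finset.card_univ, mul_comm]
    omega
  · exact Or.inr (cyc hc.1)
  · exact Or.inr (cyc hc.1)
  · obtain ⟨hcard, hd, hadj⟩ := hc
    obtain ⟨v, w, hvw⟩ := Fintype.exists_pair_of_one_lt_card (α := H.V) (by omega)
    obtain ⟨e, _⟩ := hadj v w hvw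
    exact absurd (doubled_absurd hs hd e) not_false
  · obtain ⟨hconn, hd, hdeg4, hodd⟩ := hc
    obtain ⟨v⟩ := hconn.nonempty
    have : 0 < (Finset.univ.filter (fun e : H.E => v ∈ H.ends e)).card := by
      have h4 := hdeg4 v
      unfold SignedGraph.degree at h4
      omega
    obtain ⟨e, _⟩ := Finset.card_pos.1 this
    exact absurd (doubled_absurd hs hd e) not_false

end GTB2
namespace GTB2

open SignedGraph SimpleGraph

variable {T : SignedGraph}

/-! ### Arithmetic lemmas -/

section Arith

variable {kq : ℚ} (hk : 4 ≤ kq)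

private def cQ (kq : ℚ) : ℚ := kq - 2 + 2 / (kq - 1)

lemma hK_pos (hk : 4 ≤ kq) : 0 < kq - 1 := by linarith

lemma hr_eq (hk : 4 ≤ kq) : 2 / (kq - 1) * (kq - 1) = 2 :=
  div_mul_cancel₀ 2 (ne_of_gt (hK_pos hk))

lemma hr_pos (hk : 4 ≤ kq) : 0 < 2 / (kq - 1) := div_pos two_pos (hK_pos hk)

lemma hr_le_one (hk : 4 ≤ kq) : 2 / (kq - 1) ≤ 1 :=
  (div_le_one (hK_pos hk)).2 (by linarith)

lemma arith0 (hk : 4 ≤ kq) : 2 ≤ cQ kq := by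
  have := hr_pos hk
  unfold cQ
  linarith

lemma arith1 (hk : 4 ≤ kq) {t : ℚ} (ht1 : 1 ≤ t) (ht2 : t ≤ kq - 1) :
    2 ≤ cQ kq * t - t * (t - 1) := by
  have hr := hr_eq hk
  have h1 : 0 ≤ t - 2 / (kq - 1) := by
    have := hr_le_one hk
    linarith
  have h2 : 0 ≤ kq - 1 - t := by linarith
  have hprod := mul_nonneg h1 h2
  unfold cQ
  nlinarith [hprod, hr]

lemma arith2 (hk : 4 ≤ kq) {n : ℚ} (hn : 3 ≤ n) : 2 ≤ cQ kq * n - 2 * n := by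
  have hr := hr_eq hk
  have hKp := hK_pos hk
  have hrp := hr_pos hk
  have hprod : (0:ℚ) ≤ (3 * kq - 5) * (kq - 4) := by nlinarith
  have c3 : 0 ≤ 3 * (kq - 4) + 3 * (2 / (kq - 1)) - 2 := by nlinarith [hprod, hr, hKp]
  have h1 : 0 ≤ (n - 3) * (kq - 4) := by nlinarith
  have h2 : 0 ≤ (n - 3) * (2 / (kq - 1)) := mul_nonneg (by linarith) (le_of_lt hrp)
  unfold cQ
  nlinarith [h1, h2, c3]

lemma arith_force_complete (hk : 4 ≤ kq) {t : ℚ} (ht1 : 1 ≤ t)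
    (hlt : cQ kq * (t - 1) - t * (t - 1) < 0) : kq - 2 < t := by
  have hrp := hr_pos hk
  by_contra hcon
  push_neg at hcon
  have hct : t ≤ cQ kq := by unfold cQ; linarith
  have : 0 ≤ (t - 1) * (cQ kq - t) := mul_nonneg (by linarith) (by linarith)
  nlinarith [this]

lemma arith_force_cycle (hk5 : 5 ≤ kq) {n : ℚ} (hn : 3 ≤ n) :
    0 ≤ cQ kq * (n - 1) - 2 * n := by
  have hrp : 0 < 2 / (kq - 1) := div_pos two_pos (by linarith)
  have hc3 : 3 ≤ cQ kq := by unfold cQ; linarith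
  nlinarith [mul_nonneg (by linarith : (0:ℚ) ≤ n - 1) (by linarith : (0:ℚ) ≤ cQ kq - 3)]

end Arith

/-! ### Structural helpers -/

/-- The number of edges fully inside `X`. -/
noncomputable def eN (T : SignedGraph) (X : Set T.V) : ℕ := {e : T.E | ∀ x ∈ T.ends e, x ∈ X}.ncard

lemma induced_isFull (X : Set T.V) : IsFull T (T.induced X) := fun _ he => he

lemma delete_isFull {H : T.Subgraph} (hF : IsFull T H) (w : T.V) :
    IsFull T (H.delete w) := fun e he =>
  ⟨hF e (fun x hx => (he x hx).1), fun hwe => (he w hwe).2 rfl⟩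

lemma induced_verts (X : Set T.V) : (T.induced X).verts = X := rfl

lemma eN_univ : eN T Set.univ = Fintype.card T.E := by
  unfold eN
  have : {e : T.E | ∀ x ∈ T.ends e, x ∈ Set.univ} = Set.univ := by
    ext e; simp
  rw [this, Set.ncard_univ, Nat.card_eq_fintype_card]

lemma card_univ_ncard : (Set.univ : Set T.V).ncard = Fintype.card T.V := by
  rw [Set.ncard_univ, Nat.card_eq_fintype_card]

/-! ### Balanced/complete transfer from the full induced subgraph -/

def eI (T : SignedGraph) (e : T.E) : (T.induced Set.univ).toSG.E :=
  ⟨e, fun x _ => Set.mem_univ x⟩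

def vI (T : SignedGraph) (v : T.V) : (T.induced Set.univ).toSG.V :=
  ⟨v, Set.mem_univ v⟩

noncomputable def liftUW : ∀ {a b : T.V}, SignedGraph.Walk T a b →
    SignedGraph.Walk (T.induced Set.univ).toSG (vI T a) (vI T b)
  | _, _, .nil v => .nil (vI T v)
  | _, _, SignedGraph.Walk.cons (v := v) (w := w) e he p =>
      .cons (eI T e) ((toSG_ends_eq (eI T e) (a := vI T v) (b := vI T w)).2 he) (liftUW p)

lemma liftUW_edges : ∀ {a b : T.V} (p : SignedGraph.Walk T a b),
    (liftUW p).edges = p.edges.map (eI T)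
  | _, _, .nil v => rfl
  | _, _, .cons e he p => by
      show (eI T e) :: (liftUW p).edges = _
      rw [liftUW_edges p]
      rfl

lemma liftUW_support : ∀ {a b : T.V} (p : SignedGraph.Walk T a b),
    (liftUW p).support = p.support.map (vI T)
  | _, _, .nil v => rfl
  | _, _, .cons e he p => by
      show (vI T _) :: (liftUW p).support = _
      rw [liftUW_support p]
      rfl

lemma liftUW_signProd {a b : T.V} (p : SignedGraph.Walk T a b) :
    (liftUW p).signProd = p.signProd := by
  unfold SignedGraph.Walk.signProd
  rw [liftUW_edges p, List.map_map]
  rfl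

lemma balanced_transfer (hbal : (T.induced Set.univ).toSG.Balanced) : T.Balanced := by
  intro v p hp
  have hcyc : (liftUW p).IsCycle := by
    obtain ⟨h1, h2, h3⟩ := hp
    refine ⟨?_, ?_, ?_⟩
    · rw [liftUW_edges p]
      simpa using h1
    · rw [liftUW_edges p]
      exact h2.map (f := eI T) (fun x y h => congrArg Subtype.val h)
    · rw [liftUW_support p, ← List.map_tail]
      exact h3.map (f := vI T) (fun x y h => congrArg Subtype.val h)
  have h := hbal (vI T v) (liftUW p) hcyc
  rwa [liftUW_signProd] at h

end GTB2
namespace GTB2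

open SignedGraph SimpleGraph

variable {T : SignedGraph}

lemma noCutVert_of (X : Set T.V) (hX : ConnSet T X) (hnc : ∀ w, ¬ CutIn T X w) :
    ∀ w, ¬ (T.induced X).IsCutVertex w := by
  rintro w ⟨hw, hne, hcon⟩
  have hcs : ConnSet T (X \ {w}) := by
    by_contra hh
    exact hnc w ⟨hw, hne, hh⟩
  exact hcon (connected_intro (delete_isFull (induced_isFull X) w) hcs)

lemma no_outside {X : Set T.V} (hInv : Inv T X) {B' : T.Subgraph}
    (hB'c : B'.toSG.Connected) (hB'nc : ∀ v, ¬ B'.IsCutVertex v)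
    {W : Set T.V} (hW : W ⊆ B'.verts) (hWX : W ⊆ X)
    (hW2 : ∃ a b, a ∈ W ∧ b ∈ W ∧ a ≠ b) :
    ∀ z ∈ B'.verts, z ∈ X := by
  intro z hz
  by_contra hzX
  obtain ⟨vz, D, hvzX, hD, hzD, hDX⟩ := hInv.2 z hzX
  obtain ⟨a, b, haW, hbW, hab⟩ := hW2
  obtain ⟨x₀, hx₀W, hx₀vz⟩ : ∃ x₀, x₀ ∈ W ∧ x₀ ≠ vz := by
    by_cases h : a = vz
    · exact ⟨b, hbW, fun hh => hab (h ▸ hh ▸ rfl)⟩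
    · exact ⟨a, haW, h⟩
  have hx₀D : x₀ ∉ D := notMem_of_inter_empty hDX (hWX hx₀W)
  have hclD := hD.2.2.2.2.2
  obtain ⟨q, hq⟩ := (connected_elim hB'c).2 x₀ (hW hx₀W) z hz
  have hvzsup : vz ∈ q.support := by
    have := escape (fun x hx y _ => hclD x hx y (Set.mem_univ y)) q.reverse
      (fun _ _ => Set.mem_univ _) hzD hx₀D
    rwa [Walk.support_reverse, List.mem_reverse] at this
  have hvzB' : vz ∈ B'.verts := hq vz hvzsup
  refine hB'nc vz ⟨hvzB', ⟨z, hz, fun h => hzX (Set.mem_singleton_iff.1 h ▸ hvzX)⟩, ?_⟩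
  intro hcc
  obtain ⟨q2, hq2⟩ := (connected_elim hcc).2 x₀
    ⟨hW hx₀W, fun h => hx₀vz (Set.mem_singleton_iff.1 h)⟩ z
    ⟨hz, fun h => hzX (Set.mem_singleton_iff.1 h ▸ hvzX)⟩
  have : vz ∈ q2.support := by
    have := escape (fun x hx y _ => hclD x hx y (Set.mem_univ y)) q2.reverse
      (fun _ _ => Set.mem_univ _) hzD hx₀D
    rwa [Walk.support_reverse, List.mem_reverse] at this
  exact (hq2 vz this).2 rfl

lemma blockNoCut {X : Set T.V} (hInv : Inv T X) (h2 : 1 < X.ncard)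
    (hnc : ∀ w, ¬ CutIn T X w) : (T.induced X).IsBlock := by
  refine ⟨connected_intro (induced_isFull X) hInv.1, noCutVert_of X hInv.1 hnc, ?_⟩
  intro B' hle hB'c hB'nc
  have hW2 : ∃ a b, a ∈ X ∧ b ∈ X ∧ a ≠ b := (Set.one_lt_ncard_iff (Set.toFinite X)).1 h2
  have hsub : B'.verts ⊆ X := fun z hz =>
    no_outside hInv hB'c hB'nc hle.1 (subset_refl X) hW2 z hz
  exact ⟨hsub, fun e he x hx => hsub (B'.ends_mem e he x hx)⟩

lemma connBv {X C : Set T.V} {v' : T.V} (hInv : Inv T X) (hcomp : IsCompIn T X v' C) :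
    ConnSet T (C ∪ {v'}) := by
  have hBvX : C ∪ {v'} ⊆ X := by
    rintro z (hz | hz)
    · exact hcomp.1 hz
    · exact Set.mem_singleton_iff.1 hz ▸ hcomp.2.1
  refine ⟨⟨v', Or.inr rfl⟩, fun a ha b hb => ?_⟩
  obtain ⟨p0, hp0⟩ := hInv.1.2 a (hBvX ha) b (hBvX hb)
  exact ⟨p0.toPath, confineBv hcomp (subset_refl X) _ p0.toPath.2
    (fun z hz => hp0 z (p0.support_toPath_subset hz)) ha hb⟩

lemma blockCut {X C : Set T.V} {v' : T.V} (hInv : Inv T X) (hcomp : IsCompIn T X v' C)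
    (hminfree : ∀ w ∈ C, ¬ CutIn T X w) :
    (T.induced (C ∪ {v'})).IsBlock := by
  obtain ⟨hCX, hv'X, hv'C, ⟨c₀, hc₀⟩, hconnC, hcl⟩ := hcomp
  have hBvX : C ∪ {v'} ⊆ X := by
    rintro z (hz | hz)
    · exact hCX hz
    · exact Set.mem_singleton_iff.1 hz ▸ hv'X
  refine ⟨connected_intro (induced_isFull _) (connBv hInv ⟨hCX, hv'X, hv'C, ⟨c₀, hc₀⟩, hconnC, hcl⟩), ?_, ?_⟩
  · -- no cut vertex
    rintro w ⟨hwB, hne, hcon⟩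
    apply hcon
    apply connected_intro (delete_isFull (induced_isFull _) w)
    show ConnSet T ((C ∪ {v'}) \ {w})
    rcases hwB with hwC | hwV
    · -- w ∈ C
      have hXw : ConnSet T (X \ {w}) := by
        by_contra hh
        refine hminfree w hwC ⟨hCX hwC, ⟨v', hv'X, fun h => hv'C (Set.mem_singleton_iff.1 h ▸ hwC)⟩, hh⟩
      refine ⟨hne, fun a ha b hb => ?_⟩
      obtain ⟨p0, hp0⟩ := hXw.2 a ⟨hBvX ha.1, ha.2⟩ b ⟨hBvX hb.1, hb.2⟩
      have hsupX : ∀ z ∈ (p0.toPath : T.adjGraph.Walk a b).support, z ∈ X \ {w} :=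
        fun z hz => hp0 z (p0.support_toPath_subset hz)
      refine ⟨p0.toPath, fun z hz => ⟨?_, (hsupX z hz).2⟩⟩
      exact confineBv ⟨hCX, hv'X, hv'C, ⟨c₀, hc₀⟩, hconnC, hcl⟩
        Set.diff_subset _ p0.toPath.2 hsupX ha.1 hb.1 z hz
    · -- w = v'
      have hwv' : w = v' := Set.mem_singleton_iff.1 hwV
      subst hwv'
      have heq : (C ∪ {w}) \ {w} = C := by
        ext z
        simp only [Set.mem_diff, Set.mem_union, Set.mem_singleton_iff]
        constructor
        · rintro ⟨hz | hz, hzw⟩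
          · exact hz
          · exact absurd hz hzw
        · intro hz
          exact ⟨Or.inl hz, fun h => hv'C (h ▸ hz)⟩
      rw [heq]
      exact ⟨⟨c₀, hc₀⟩, hconnC⟩
  · -- maximality
    intro B' hle hB'c hB'nc
    have hW2 : ∃ a b, a ∈ C ∪ {v'} ∧ b ∈ C ∪ {v'} ∧ a ≠ b :=
      ⟨c₀, v', Or.inl hc₀, Or.inr rfl, fun h => hv'C (h ▸ hc₀)⟩
    have hsubX : ∀ z ∈ B'.verts, z ∈ X :=
      no_outside hInv hB'c hB'nc hle.1 hBvX hW2
    have hsub : B'.verts ⊆ C ∪ {v'} := by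
      intro z hz
      by_contra hzB
      have hzX : z ∈ X := hsubX z hz
      have hzC : z ∉ C := fun h => hzB (Or.inl h)
      have hzv' : z ≠ v' := fun h => hzB (h ▸ Or.inr rfl)
      obtain ⟨q, hq⟩ := (connected_elim hB'c).2 c₀ (hle.1 (Or.inl hc₀)) z hz
      have hqP := q.toPath.2
      have hqB' : ∀ u ∈ (q.toPath : T.adjGraph.Walk c₀ z).support, u ∈ B'.verts :=
        fun u hu => hq u (q.support_toPath_subset hu)
      have hqX : ∀ u ∈ (q.toPath : T.adjGraph.Walk c₀ z).support, u ∈ X :=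
        path_stays hInv _ hqP (hCX hc₀) hzX
      have hv'sup : v' ∈ (q.toPath : T.adjGraph.Walk c₀ z).support :=
        escape hcl _ hqX hc₀ hzC
      have hv'B' : v' ∈ B'.verts := hqB' v' hv'sup
      refine hB'nc v' ⟨hv'B', ⟨z, hz, fun h => hzv' (Set.mem_singleton_iff.1 h)⟩, ?_⟩
      intro hcc
      obtain ⟨q2, hq2⟩ := (connected_elim hcc).2 c₀
        ⟨hle.1 (Or.inl hc₀), fun h => hv'C (Set.mem_singleton_iff.1 h ▸ hc₀)⟩ z
        ⟨hz, fun h => hzv' (Set.mem_singleton_iff.1 h)⟩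
      have hq2X : ∀ u ∈ (q2.toPath : T.adjGraph.Walk c₀ z).support, u ∈ X :=
        path_stays hInv _ q2.toPath.2 (hCX hc₀) hzX
      have hnov' : v' ∉ (q2.toPath : T.adjGraph.Walk c₀ z).support :=
        fun h => (hq2 v' (q2.support_toPath_subset h)).2 rfl
      exact hzC (confine hcl _ hq2X hc₀ hnov')
    exact ⟨hsub, fun e he x hx => hsub (B'.ends_mem e he x hx)⟩

end GTB2
namespace GTB2

open SignedGraph SimpleGraph

variable {T : SignedGraph}

lemma hatComp (hconn : T.Connected) {X S : Set T.V} {pt : T.V} (hInv : Inv T X)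
    (hSX : S ⊆ X) (hSne : S.Nonempty) (hptX : pt ∈ X) (hptS : pt ∉ S)
    (hconnS : ConnSet T S)
    (hclS : ∀ x ∈ S, ∀ y ∈ X, T.adjGraph.Adj x y → y ≠ pt → y ∈ S) :
    ∃ Chat, IsCompIn T Set.univ pt Chat ∧ S ⊆ Chat ∧ Chat ∩ (X \ S) = ∅ ∧
      ∀ vz D, vz ∈ S → IsCompIn T Set.univ vz D → D ∩ X = ∅ → D ⊆ Chat := by
  set Chat : Set T.V := {y | ∃ s ∈ S, ∃ p : T.adjGraph.Walk s y, pt ∉ p.support} with hChat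
  have hSChat : S ⊆ Chat := by
    intro s hs
    refine ⟨s, hs, .nil, ?_⟩
    simp only [Walk.support_nil, List.mem_singleton]
    exact fun h => hptS (h ▸ hs)
  have hmem_of_support : ∀ {s y : T.V}, s ∈ S → ∀ (p : T.adjGraph.Walk s y),
      pt ∉ p.support → ∀ z ∈ p.support, z ∈ Chat := by
    intro s y hs p hp z hz
    exact ⟨s, hs, p.takeUntil z hz, fun h => hp (Walk.support_takeUntil_subset _ _ h)⟩
  have hptChat : pt ∉ Chat := by
    rintro ⟨s, hs, p, hp⟩
    exact hp p.end_mem_support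
  have hcompChat : IsCompIn T Set.univ pt Chat := by
    refine ⟨fun _ _ => Set.mem_univ _, Set.mem_univ _, hptChat, hSne.imp (fun s hs => hSChat hs), ?_, ?_⟩
    · rintro y₁ ⟨s₁, hs₁, p₁, hp₁⟩ y₂ ⟨s₂, hs₂, p₂, hp₂⟩
      obtain ⟨pc, hpc⟩ := hconnS.2 s₁ hs₁ s₂ hs₂
      refine ⟨p₁.reverse.append (pc.append p₂), fun z hz => ?_⟩
      rcases (Walk.mem_support_append_iff _ _).1 hz with h | h
      · rw [Walk.support_reverse, List.mem_reverse] at h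
        exact hmem_of_support hs₁ p₁ hp₁ z h
      · rcases (Walk.mem_support_append_iff _ _).1 h with h' | h'
        · exact hSChat (hpc z h')
        · exact hmem_of_support hs₂ p₂ hp₂ z h'
    · rintro y ⟨s, hs, p, hp⟩ y₂ _ hadj hy₂
      refine ⟨s, hs, p.concat hadj, ?_⟩
      rw [Walk.support_concat, List.mem_append]
      rintro (h | h)
      · exact hp h
      · rw [List.mem_singleton] at h
        exact hy₂ h.symm
  have hChatdisj : Chat ∩ (X \ S) = ∅ := by
    ext y
    simp only [Set.mem_inter_iff, Set.mem_empty_iff_false, iff_false, not_and]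
    rintro ⟨s, hs, p, hp⟩ ⟨hyX, hyS⟩
    have hP := p.toPath.2
    have hpt' : pt ∉ (p.toPath : T.adjGraph.Walk s y).support :=
      fun h => hp (p.support_toPath_subset h)
    have hsuppX : ∀ z ∈ (p.toPath : T.adjGraph.Walk s y).support, z ∈ X :=
      path_stays hInv _ hP (hSX hs) hyX
    exact hyS (confine hclS _ hsuppX hs hpt')
  refine ⟨Chat, hcompChat, hSChat, hChatdisj, ?_⟩
  intro vz D hvzS hD hDX d hd
  have hvzD : vz ∉ D := notMem_of_inter_empty hDX (hSX hvzS)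
  obtain ⟨d₁, hd₁⟩ := hD.2.2.2.1
  obtain ⟨p0⟩ := hconn.preconnected d₁ vz
  obtain ⟨d₀, hd₀D, hadj⟩ := exitAdj (fun x hx y _ => hD.2.2.2.2.2 x hx y (Set.mem_univ y))
    p0 (fun _ _ => Set.mem_univ _) hd₁ hvzD
  obtain ⟨pd, hpd⟩ := hD.2.2.2.2.1 d₀ hd₀D d hd
  refine ⟨vz, hvzS, Walk.cons hadj.symm pd, ?_⟩
  rw [Walk.support_cons, List.mem_cons]
  rintro (h | h)
  · exact hptS (h ▸ hvzS)
  · exact notMem_of_inter_empty hDX hptX (hpd pt h)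

end GTB2
namespace GTB2

open SignedGraph SimpleGraph

variable {T : SignedGraph}

lemma cast_sub_one {a b : ℕ} (h1 : 1 ≤ a) (h : a ≤ b - 1) (hb : 1 ≤ b) :
    (a : ℚ) ≤ (b : ℚ) - 1 := by
  have : (a : ℚ) ≤ ((b - 1 : ℕ) : ℚ) := Nat.cast_le.2 h
  rwa [Nat.cast_sub hb] at this

lemma caseNoCut (k : ℕ) (hk : 4 ≤ k) (hconn : T.Connected) (hsimple : T.SimpleUnderlying)
    (hdeg : ∀ v, T.degree v ≤ k - 1)
    (hblocks : ∀ B : T.Subgraph, B.IsBlock → B.toSG.IsBrick)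
    (hnotK : ¬ (T.IsBalancedComplete ∧ Fintype.card T.V = k))
    {X : Set T.V} (hInv : Inv T X) (h2 : 1 < X.ncard) (hnc : ∀ w, ¬ CutIn T X w) :
    (2:ℚ) ≤ cQ (k:ℚ) * (X.ncard : ℚ) - 2 * (eN T X : ℚ) := by
  have hkq : (4:ℚ) ≤ (k:ℚ) := by exact_mod_cast hk
  have hblk := blockNoCut hInv h2 hnc
  have hbrick := hblocks _ hblk
  have hdata := brick_data hbrick (toSG_simple hsimple _)
  have hcardV : Fintype.card (T.induced X).toSG.V = X.ncard := toSG_card_V _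
  have hcardE : Fintype.card (T.induced X).toSG.E = eN T X := toSG_card_E _
  obtain ⟨x₁, hx₁⟩ := hInv.1.1
  rcases hdata with ⟨hBC, hdegs, hEE⟩ | ⟨hdegs, hEV, h3⟩
  · -- complete brick
    set t := Fintype.card (T.induced X).toSG.V with ht
    have ht1 : 1 ≤ t := by
      rw [hcardV]
      omega
    have hdeg1 : (T.induced X).degree x₁ = t - 1 := by
      have := hdegs ⟨x₁, hx₁⟩
      exact (toSG_degree _ ⟨x₁, hx₁⟩).symm.trans this
    have htk : t ≤ k := by
      have ha := subgraph_degree_le (T.induced X) x₁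
      have hb := hdeg x₁
      omega
    have htk1 : t ≤ k - 1 := by
      by_cases hXu : X = Set.univ
      · by_cases htk' : t = k
        · exfalso
          apply hnotK
          have hTcompl : T.IsCompleteGraph := by
            refine ⟨hsimple, fun v w hvw => ?_⟩
            have hvX : v ∈ X := hXu ▸ Set.mem_univ v
            have hwX : w ∈ X := hXu ▸ Set.mem_univ w
            have hne : (⟨v, hvX⟩ : (T.induced X).toSG.V) ≠ ⟨w, hwX⟩ :=
              fun h => hvw (congrArg Subtype.val h)
            obtain ⟨e, _, he⟩ := (toSG_adj _ _).1 (hBC.1.2 _ _ hne)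
            exact ⟨e, he⟩
          have hTbal : T.Balanced := by
            subst hXu
            exact balanced_transfer hBC.2
          refine ⟨⟨hTcompl, hTbal⟩, ?_⟩
          rw [← htk', hcardV, hXu, card_univ_ncard]
        · omega
      · obtain ⟨z, hz⟩ := (Set.ne_univ_iff_exists_notMem _).1 hXu
        obtain ⟨vz, D, hvzX, hD, hzD, hDX⟩ := hInv.2 z hz
        have hvzdeg : (T.induced X).degree vz = t - 1 := by
          have := hdegs ⟨vz, hvzX⟩
          exact (toSG_degree _ ⟨vz, hvzX⟩).symm.trans this
        obtain ⟨p0⟩ := hconn.preconnected z vz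
        obtain ⟨d, hdD, hadj⟩ := exitAdj (fun x hx y _ => hD.2.2.2.2.2 x hx y (Set.mem_univ y))
          p0 (fun _ _ => Set.mem_univ _) hzD (notMem_of_inter_empty hDX hvzX)
        obtain ⟨e', he'⟩ := hadj
        have hstrict : (T.induced X).degree vz < T.degree vz := by
          unfold SignedGraph.degree SignedGraph.Subgraph.degree
          apply Finset.card_lt_card
          constructor
          · intro e he
            simp only [Finset.mem_filter, Finset.mem_univ, true_and] at he ⊢
            exact he.2
          · intro hsup
            have he'mem : e' ∈ Finset.univ.filter (fun e => vz ∈ T.ends e) := by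
              simp only [Finset.mem_filter, Finset.mem_univ, true_and, he']
              exact Sym2.mem_iff.2 (Or.inr rfl)
            have := hsup he'mem
            simp only [Finset.mem_filter, Finset.mem_univ, true_and] at this
            have hd' : d ∈ X := this.1 d (by rw [he']; exact Sym2.mem_iff.2 (Or.inl rfl))
            exact notMem_of_inter_empty hDX hd' hdD
        have := hdeg vz
        omega
    have hcast : (2:ℚ) * ((eN T X : ℕ) : ℚ) = (t:ℚ) * ((t:ℚ) - 1) := by
      have h0 : ((2 * Fintype.card (T.induced X).toSG.E : ℕ) : ℚ)
          = ((t * (t - 1) : ℕ) : ℚ) := by exact_mod_cast congrArg Nat.cast hEE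
      rw [hcardE] at h0
      push_cast [Nat.cast_sub ht1] at h0
      linarith
    have harith := arith1 hkq (t := (t:ℚ)) (by exact_mod_cast ht1)
      (cast_sub_one ht1 htk1 (by omega))
    have hXt : (X.ncard : ℚ) = (t : ℚ) := by exact_mod_cast congrArg Nat.cast hcardV.symm
    rw [hXt]
    linarith
  · -- cycle brick
    have hXn : X.ncard = Fintype.card (T.induced X).toSG.V := hcardV.symm
    have hEn : eN T X = Fintype.card (T.induced X).toSG.V := by rw [← hcardE, hEV]
    have harith := arith2 hkq (n := ((Fintype.card (T.induced X).toSG.V : ℕ) : ℚ))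
      (by exact_mod_cast h3)
    rw [hXn, hEn]
    linarith

end GTB2
namespace GTB2

open SignedGraph SimpleGraph

variable {T : SignedGraph}

lemma edge_disj1 {X C : Set T.V} {v' : T.V} :
    Disjoint {e : T.E | ∀ x ∈ T.ends e, x ∈ X \ C}
      {e : T.E | ∀ x ∈ T.ends e, x ∈ C ∪ {v'}} := by
  rw [Set.disjoint_left]
  rintro e h1 h2
  obtain ⟨a, b, hab, hne⟩ := ends_pair T e
  have hamem : a ∈ T.ends e := by rw [hab]; exact Sym2.mem_iff.2 (Or.inl rfl)
  have hbmem : b ∈ T.ends e := by rw [hab]; exact Sym2.mem_iff.2 (Or.inr rfl)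
  have ha : a = v' := by
    rcases h2 a hamem with h | h
    · exact absurd h (h1 a hamem).2
    · exact h
  have hb : b = v' := by
    rcases h2 b hbmem with h | h
    · exact absurd h (h1 b hbmem).2
    · exact h
  exact hne (ha.trans hb.symm)

lemma edge_cover1 {X C : Set T.V} {v' : T.V} (hcomp : IsCompIn T X v' C) :
    {e : T.E | ∀ x ∈ T.ends e, x ∈ X} =
      {e : T.E | ∀ x ∈ T.ends e, x ∈ X \ C} ∪ {e : T.E | ∀ x ∈ T.ends e, x ∈ C ∪ {v'}} := by
  have hBvX : C ∪ {v'} ⊆ X := by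
    rintro z (hz | hz)
    · exact hcomp.1 hz
    · exact Set.mem_singleton_iff.1 hz ▸ hcomp.2.1
  ext e
  simp only [Set.mem_setOf_eq, Set.mem_union]
  constructor
  · intro he
    by_cases hC : ∃ x ∈ T.ends e, x ∈ C
    · right
      obtain ⟨a, haE, haC⟩ := hC
      obtain ⟨c, hac, hcne⟩ := mem_ends_other (T := T) haE
      have hcB : c ∈ C ∪ {v'} := by
        by_cases hcv : c = v'
        · exact Or.inr (by simp [hcv])
        · refine Or.inl (hcomp.2.2.2.2.2 a haC c ?_ ⟨e, hac⟩ hcv)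
          exact he c (by rw [hac]; exact Sym2.mem_iff.2 (Or.inr rfl))
      intro x hx
      rw [hac] at hx
      rcases Sym2.mem_iff.1 hx with rfl | rfl
      · exact Or.inl haC
      · exact hcB
    · left
      push_neg at hC
      exact fun x hx => ⟨he x hx, hC x hx⟩
  · rintro (he | he)
    · exact fun x hx => (he x hx).1
    · exact fun x hx => hBvX (he x hx)

lemma edge_cover2 {X C : Set T.V} {v' : T.V} (hcomp : IsCompIn T X v' C)
    {estar : T.E} {u : T.V} (hestar : T.ends estar = s(v', u)) (huX : u ∈ X)
    (huB : u ∉ C ∪ {v'})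
    (huniq : ∀ e : T.E, v' ∈ T.ends e → ¬(∀ x ∈ T.ends e, x ∈ C ∪ {v'}) →
      (∀ x ∈ T.ends e, x ∈ X) → e = estar) :
    {e : T.E | ∀ x ∈ T.ends e, x ∈ X} =
      ({e : T.E | ∀ x ∈ T.ends e, x ∈ X \ (C ∪ {v'})} ∪
        {e : T.E | ∀ x ∈ T.ends e, x ∈ C ∪ {v'}}) ∪ {estar} := by
  have hBvX : C ∪ {v'} ⊆ X := by
    rintro z (hz | hz)
    · exact hcomp.1 hz
    · exact Set.mem_singleton_iff.1 hz ▸ hcomp.2.1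
  ext e
  simp only [Set.mem_setOf_eq, Set.mem_union, Set.mem_singleton_iff]
  constructor
  · intro he
    by_cases hful : ∀ x ∈ T.ends e, x ∈ C ∪ {v'}
    · exact Or.inl (Or.inr hful)
    · by_cases hnone : ∀ x ∈ T.ends e, x ∉ C ∪ {v'}
      · exact Or.inl (Or.inl (fun x hx => ⟨he x hx, hnone x hx⟩))
      · right
        push_neg at hnone
        obtain ⟨a, haE, haB⟩ := hnone
        have hav' : a = v' := by
          rcases haB with haC | hav
          · exfalso
            obtain ⟨c, hac, hcne⟩ := mem_ends_other (T := T) haE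
            have hcB : c ∈ C ∪ {v'} := by
              by_cases hcv : c = v'
              · exact Or.inr (by simp [hcv])
              · refine Or.inl (hcomp.2.2.2.2.2 a haC c ?_ ⟨e, hac⟩ hcv)
                exact he c (by rw [hac]; exact Sym2.mem_iff.2 (Or.inr rfl))
            apply hful
            intro x hx
            rw [hac] at hx
            rcases Sym2.mem_iff.1 hx with rfl | rfl
            · exact Or.inl haC
            · exact hcB
          · exact Set.mem_singleton_iff.1 hav
        exact huniq e (hav' ▸ haE) hful he
  · rintro ((he | he) | he)
    · exact fun x hx => (he x hx).1
    · exact fun x hx => hBvX (he x hx)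
    · subst he
      intro x hx
      rw [hestar] at hx
      rcases Sym2.mem_iff.1 hx with rfl | rfl
      · exact hcomp.2.1
      · exact huX

lemma ncard_split1 {X C : Set T.V} {v' : T.V} (hcomp : IsCompIn T X v' C) :
    eN T X = eN T (X \ C) + eN T (C ∪ {v'}) := by
  unfold eN
  rw [edge_cover1 hcomp]
  exact Set.ncard_union_eq edge_disj1 (Set.toFinite _) (Set.toFinite _)

lemma ncard_split2 {X C : Set T.V} {v' : T.V} (hcomp : IsCompIn T X v' C)
    {estar : T.E} {u : T.V} (hestar : T.ends estar = s(v', u)) (huX : u ∈ X)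
    (huB : u ∉ C ∪ {v'})
    (huniq : ∀ e : T.E, v' ∈ T.ends e → ¬(∀ x ∈ T.ends e, x ∈ C ∪ {v'}) →
      (∀ x ∈ T.ends e, x ∈ X) → e = estar) :
    eN T X = eN T (X \ (C ∪ {v'})) + eN T (C ∪ {v'}) + 1 := by
  have hv'e : v' ∈ T.ends estar := by rw [hestar]; exact Sym2.mem_iff.2 (Or.inl rfl)
  have hue : u ∈ T.ends estar := by rw [hestar]; exact Sym2.mem_iff.2 (Or.inr rfl)
  have hnotin : estar ∉ ({e : T.E | ∀ x ∈ T.ends e, x ∈ X \ (C ∪ {v'})} ∪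
      {e : T.E | ∀ x ∈ T.ends e, x ∈ C ∪ {v'}}) := by
    rintro (h | h)
    · exact (h v' hv'e).2 (Or.inr rfl)
    · exact huB (h u hue)
  unfold eN
  rw [edge_cover2 hcomp hestar huX huB huniq]
  rw [Set.ncard_union_eq (Set.disjoint_singleton_right.2 hnotin) (Set.toFinite _)
    (Set.toFinite _), Set.ncard_singleton,
    Set.ncard_union_eq ?disj (Set.toFinite _) (Set.toFinite _)]
  case disj =>
    rw [Set.disjoint_left]
    intro e he1 he2
    have ham := Sym2.out_fst_mem (T.ends e)
    exact (he1 _ ham).2 (he2 _ ham)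

end GTB2
namespace GTB2

open SignedGraph SimpleGraph

variable {T : SignedGraph}

lemma caseCut (k : ℕ) (hk : 4 ≤ k) (hconn : T.Connected) (hsimple : T.SimpleUnderlying)
    (hdeg : ∀ v, T.degree v ≤ k - 1)
    (hblocks : ∀ B : T.Subgraph, B.IsBlock → B.toSG.IsBrick)
    {X : Set T.V} (hInv : Inv T X) (hcut : ∃ w, CutIn T X w)
    (IH : ∀ Y : Set T.V, Y.ncard < X.ncard → Inv T Y →
      (2:ℚ) ≤ cQ (k:ℚ) * (Y.ncard : ℚ) - 2 * (eN T Y : ℚ)) :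
    (2:ℚ) ≤ cQ (k:ℚ) * (X.ncard : ℚ) - 2 * (eN T X : ℚ) := by
  have hkq : (4:ℚ) ≤ (k:ℚ) := by exact_mod_cast hk
  -- minimal pair (cut vertex, component)
  have hMne : {p : ℕ | ∃ w Cc, (CutIn T X w ∧ IsCompIn T X w Cc) ∧ Cc.ncard = p}.Nonempty := by
    obtain ⟨w, hw⟩ := hcut
    obtain ⟨C₁, C₂, h1, _, _⟩ := cut_comps hw
    exact ⟨C₁.ncard, w, C₁, ⟨hw, h1⟩, rfl⟩
  obtain ⟨v', C, ⟨hv'cut, hcomp⟩, hCcard⟩ := Nat.sInf_mem hMne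
  have hmin : ∀ w D, CutIn T X w → IsCompIn T X w D → C.ncard ≤ D.ncard := by
    intro w D hw hD
    rw [hCcard]
    exact Nat.sInf_le ⟨w, D, ⟨hw, hD⟩, rfl⟩
  have hCX := hcomp.1
  have hv'X := hcomp.2.1
  have hv'C := hcomp.2.2.1
  obtain ⟨c₀, hc₀⟩ := hcomp.2.2.2.1
  have hintC := hcomp.2.2.2.2.1
  have hclC := hcomp.2.2.2.2.2
  -- C contains no cut vertex of X
  have hminfree : ∀ w ∈ C, ¬ CutIn T X w := by
    intro w hwC hwcut
    obtain ⟨D₁, D₂, hD₁, hD₂, hdisj⟩ := cut_comps hwcut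
    have hDpick : ∃ D, IsCompIn T X w D ∧ v' ∉ D := by
      by_cases h1 : v' ∈ D₁
      · refine ⟨D₂, hD₂, fun h2 => ?_⟩
        have : v' ∈ D₁ ∩ D₂ := ⟨h1, h2⟩
        rw [hdisj] at this
        exact this
      · exact ⟨D₁, hD₁, h1⟩
    obtain ⟨D, hD, hv'D⟩ := hDpick
    obtain ⟨d₁, hd₁⟩ := hD.2.2.2.1
    obtain ⟨p0, hp0⟩ := hInv.1.2 d₁ (hD.1 hd₁) w (hCX hwC)
    obtain ⟨d₀, hd₀D, hd₀w⟩ := exitAdj hD.2.2.2.2.2 p0 hp0 hd₁ hD.2.2.1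
    have hd₀C : d₀ ∈ C := hclC w hwC d₀ (hD.1 hd₀D) hd₀w.symm (fun h => hv'D (h ▸ hd₀D))
    have hDC : D ⊆ C := by
      intro z hz
      obtain ⟨pw, hpw⟩ := hD.2.2.2.2.1 d₀ hd₀D z hz
      exact confine hclC pw (fun u hu => hD.1 (hpw u hu)) hd₀C
        (fun hv's => hv'D (hpw v' hv's))
    have hssub : D ⊂ C := ⟨hDC, fun hCD => hD.2.2.1 (hCD hwC)⟩
    have h1 := Set.ncard_lt_ncard hssub (Set.toFinite C)
    have h2 := hmin w D hwcut hD
    omega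
  -- the block and its brick data
  have hblk := blockCut hInv hcomp hminfree
  have hbrick := hblocks _ hblk
  have hdata := brick_data hbrick (toSG_simple hsimple _)
  have hBvX : C ∪ {v'} ⊆ X := by
    rintro z (hz | hz)
    · exact hCX hz
    · exact Set.mem_singleton_iff.1 hz ▸ hv'X
  have hv'Bv : v' ∈ C ∪ {v'} := Or.inr rfl
  have hcardV : Fintype.card (T.induced (C ∪ {v'})).toSG.V = (C ∪ {v'}).ncard := toSG_card_V _
  have hcardE : Fintype.card (T.induced (C ∪ {v'})).toSG.E = eN T (C ∪ {v'}) := toSG_card_E _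
  have hC1 : 1 ≤ C.ncard := (Set.ncard_pos (Set.toFinite C)).2 ⟨c₀, hc₀⟩
  have hnBC : (C ∪ {v'}).ncard = C.ncard + 1 := by
    rw [Set.union_singleton, Set.ncard_insert_of_notMem hv'C (Set.toFinite C)]
  have hnB1 : 1 ≤ (C ∪ {v'}).ncard := by omega
  -- spare edge analysis at v'
  set Fv' := Finset.univ.filter (fun e : T.E => v' ∈ T.ends e) with hFv'
  set FB := Finset.univ.filter
      (fun e : T.E => e ∈ (T.induced (C ∪ {v'})).edges ∧ v' ∈ T.ends e) with hFB
  have hFBsub : FB ⊆ Fv' := by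
    intro e he
    simp only [hFv', hFB, Finset.mem_filter, Finset.mem_univ, true_and] at he ⊢
    exact he.2
  have hdegT : T.degree v' = Fv'.card := rfl
  have hdegB : (T.induced (C ∪ {v'})).degree v' = FB.card := rfl
  have hcards := Finset.card_sdiff_add_card_eq_card hFBsub
  -- a vertex of X outside the block
  have hXBv : ∃ u₀, u₀ ∈ X ∧ u₀ ∉ C ∪ {v'} := by
    by_contra h
    push_neg at h
    have heq : X \ {v'} = C := by
      ext z
      simp only [Set.mem_diff, Set.mem_singleton_iff]
      constructor
      · rintro ⟨hzX, hzv⟩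
        rcases h z hzX with hz | hz
        · exact hz
        · exact absurd (Set.mem_singleton_iff.1 hz) hzv
      · intro hz
        exact ⟨hCX hz, fun hzz => hv'C (hzz ▸ hz)⟩
    refine hv'cut.2.2 ?_
    rw [heq]
    exact ⟨⟨c₀, hc₀⟩, hintC⟩
  obtain ⟨u₀, hu₀X, hu₀B⟩ := hXBv
  obtain ⟨p0, hp0⟩ := hInv.1.2 v' hv'X u₀ hu₀X
  obtain ⟨xx, yy, hxBv, hyB, hyX, hxy, _, _⟩ := exitGen p0 hp0 hv'Bv hu₀B
  have hxv' : xx = v' := by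
    rcases hxBv with hxC | hxv
    · exfalso
      refine hyB (Or.inl (hclC xx hxC yy hyX hxy ?_))
      exact fun h => hyB (h ▸ Or.inr rfl)
    · exact Set.mem_singleton_iff.1 hxv
  rw [hxv'] at hxy
  obtain ⟨estar, hestar⟩ := hxy
  have hestar_mem : estar ∈ Fv' \ FB := by
    simp only [Finset.mem_sdiff, hFv', hFB, Finset.mem_filter, Finset.mem_univ, true_and]
    constructor
    · rw [hestar]; exact Sym2.mem_iff.2 (Or.inl rfl)
    · rintro ⟨hins, _⟩
      exact hyB (hins yy (by rw [hestar]; exact Sym2.mem_iff.2 (Or.inr rfl)))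
  have hs1 : 1 ≤ (Fv' \ FB).card := Finset.card_pos.2 ⟨estar, hestar_mem⟩
  have hdegBle : (T.induced (C ∪ {v'})).degree v' + 1 ≤ k - 1 := by
    have := hdeg v'
    omega
  -- numeric data of the brick
  have hkey : ((T.induced (C ∪ {v'})).degree v' = (C ∪ {v'}).ncard - 1 ∧
        2 * eN T (C ∪ {v'}) = (C ∪ {v'}).ncard * ((C ∪ {v'}).ncard - 1) ∧
        (C ∪ {v'}).ncard ≤ k - 1)
      ∨ ((T.induced (C ∪ {v'})).degree v' = 2 ∧ eN T (C ∪ {v'}) = (C ∪ {v'}).ncard ∧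
        3 ≤ (C ∪ {v'}).ncard) := by
    rcases hdata with ⟨hBC, hdegs, hEE⟩ | ⟨hdegs, hEV, h3⟩
    · left
      have hdv : (T.induced (C ∪ {v'})).degree v' = (C ∪ {v'}).ncard - 1 := by
        have := hdegs ⟨v', hv'Bv⟩
        have h' : (T.induced (C ∪ {v'})).degree v' =
            Fintype.card (T.induced (C ∪ {v'})).toSG.V - 1 :=
          (toSG_degree _ ⟨v', hv'Bv⟩).symm.trans this
        rwa [hcardV] at h'
      rw [hcardE, hcardV] at hEE
      exact ⟨hdv, hEE, by omega⟩
    · right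
      have hdv : (T.induced (C ∪ {v'})).degree v' = 2 := by
        have := hdegs ⟨v', hv'Bv⟩
        exact (toSG_degree _ ⟨v', hv'Bv⟩).symm.trans this
      rw [hcardE, hcardV] at hEV
      rw [hcardV] at h3
      exact ⟨hdv, hEV, h3⟩
  have hF1 : (2:ℚ) ≤ cQ (k:ℚ) * (((C ∪ {v'}).ncard : ℕ) : ℚ) - 2 * ((eN T (C ∪ {v'}) : ℕ) : ℚ) := by
    rcases hkey with ⟨_, hEE, hnBk⟩ | ⟨_, hEV, h3⟩
    · have hcast : (2:ℚ) * ((eN T (C ∪ {v'}) : ℕ) : ℚ)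
          = (((C ∪ {v'}).ncard : ℕ) : ℚ) * ((((C ∪ {v'}).ncard : ℕ) : ℚ) - 1) := by
        have h0 : ((2 * eN T (C ∪ {v'}) : ℕ) : ℚ)
            = (((C ∪ {v'}).ncard * ((C ∪ {v'}).ncard - 1) : ℕ) : ℚ) := by
          exact_mod_cast congrArg Nat.cast hEE
        push_cast [Nat.cast_sub hnB1] at h0
        linarith
      have := arith1 hkq (t := (((C ∪ {v'}).ncard : ℕ) : ℚ)) (by exact_mod_cast hnB1)
        (cast_sub_one hnB1 hnBk (by omega))
      linarith
    · have h1 : ((eN T (C ∪ {v'}) : ℕ) : ℚ) = (((C ∪ {v'}).ncard : ℕ) : ℚ) := by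
        exact_mod_cast congrArg Nat.cast hEV
      have := arith2 hkq (n := (((C ∪ {v'}).ncard : ℕ) : ℚ)) (by exact_mod_cast h3)
      linarith
  by_cases hbr : (0:ℚ) ≤ cQ (k:ℚ) * ((((C ∪ {v'}).ncard : ℕ) : ℚ) - 1)
      - 2 * ((eN T (C ∪ {v'}) : ℕ) : ℚ)
  · -- Branch I : remove C, keep v'
    obtain ⟨Chat, hChatComp, hCChat, hChatDisj, hChatOld⟩ :=
      hatComp hconn hInv hCX ⟨c₀, hc₀⟩ hv'X hv'C ⟨⟨c₀, hc₀⟩, hintC⟩ hclC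
    have hInv' : Inv T (X \ C) := by
      refine ⟨compl_conn hInv.1 hcomp, ?_⟩
      intro z hz
      by_cases hzX : z ∈ X
      · have hzC : z ∈ C := by
          by_contra hzC
          exact hz ⟨hzX, hzC⟩
        exact ⟨v', Chat, ⟨hv'X, hv'C⟩, hChatComp, hCChat hzC, hChatDisj⟩
      · obtain ⟨vz, D, hvzX, hD, hzD, hDX⟩ := hInv.2 z hzX
        by_cases hvzC : vz ∈ C
        · exact ⟨v', Chat, ⟨hv'X, hv'C⟩, hChatComp, hChatOld vz D hvzC hD hDX hzD, hChatDisj⟩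
        · refine ⟨vz, D, ⟨hvzX, hvzC⟩, hD, hzD, ?_⟩
          ext y
          simp only [Set.mem_inter_iff, Set.mem_empty_iff_false, iff_false, not_and]
          intro hyD hyX'
          exact notMem_of_inter_empty hDX hyX'.1 hyD
    have hvcount : X.ncard = (X \ C).ncard + C.ncard := by
      have h1 := Set.ncard_diff hCX (Set.toFinite C)
      have h2 := Set.ncard_le_ncard hCX (Set.toFinite X)
      omega
    have hecount := ncard_split1 (T := T) hcomp
    have hlt : (X \ C).ncard < X.ncard := by omega
    have hIH := IH _ hlt hInv'
    have hCcast : ((C.ncard : ℕ) : ℚ) = (((C ∪ {v'}).ncard : ℕ) : ℚ) - 1 := by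
      rw [hnBC]
      push_cast
      ring
    rw [show ((X.ncard : ℕ) : ℚ) = (((X \ C).ncard : ℕ) : ℚ) + ((C.ncard : ℕ) : ℚ) from by
      exact_mod_cast congrArg Nat.cast hvcount]
    rw [show ((eN T X : ℕ) : ℚ) = ((eN T (X \ C) : ℕ) : ℚ) + ((eN T (C ∪ {v'}) : ℕ) : ℚ) from by
      exact_mod_cast congrArg Nat.cast hecount]
    rw [hCcast]
    linarith
  · -- Branch II : remove C ∪ {v'}
    push_neg at hbr
    have hdegv' : (T.induced (C ∪ {v'})).degree v' = k - 2 := by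
      rcases hkey with ⟨hdv, hEE, hnBk⟩ | ⟨hdv, hEV, h3⟩
      · have hcast : (2:ℚ) * ((eN T (C ∪ {v'}) : ℕ) : ℚ)
            = (((C ∪ {v'}).ncard : ℕ) : ℚ) * ((((C ∪ {v'}).ncard : ℕ) : ℚ) - 1) := by
          have h0 : ((2 * eN T (C ∪ {v'}) : ℕ) : ℚ)
              = (((C ∪ {v'}).ncard * ((C ∪ {v'}).ncard - 1) : ℕ) : ℚ) := by
            exact_mod_cast congrArg Nat.cast hEE
          push_cast [Nat.cast_sub hnB1] at h0
          linarith
        have hforce : (k:ℚ) - 2 < (((C ∪ {v'}).ncard : ℕ) : ℚ) := by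
          apply arith_force_complete hkq (t := (((C ∪ {v'}).ncard : ℕ) : ℚ))
            (by exact_mod_cast hnB1)
          linarith
        have hforce' : k - 2 < (C ∪ {v'}).ncard := by
          have h5 : ((k - 2 : ℕ) : ℚ) < (((C ∪ {v'}).ncard : ℕ) : ℚ) := by
            rw [Nat.cast_sub (by omega : 2 ≤ k)]
            exact_mod_cast hforce
          exact_mod_cast h5
        omega
      · have hk4 : k = 4 := by
          by_contra hne4
          have hk5 : 5 ≤ k := by omega
          have h5q : (5:ℚ) ≤ (k:ℚ) := by exact_mod_cast hk5
          have harith := arith_force_cycle h5q (n := (((C ∪ {v'}).ncard : ℕ) : ℚ))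
            (by exact_mod_cast h3)
          have hEVq : ((eN T (C ∪ {v'}) : ℕ) : ℚ) = (((C ∪ {v'}).ncard : ℕ) : ℚ) := by
            exact_mod_cast congrArg Nat.cast hEV
          rw [hEVq] at hbr
          linarith
        rw [hdv, hk4]
    have hsle : (Fv' \ FB).card ≤ 1 := by
      have := hdeg v'
      omega
    have huniqF : ∀ e ∈ Fv' \ FB, e = estar := fun e he =>
      Finset.card_le_one.1 hsle e he estar hestar_mem
    have huniq : ∀ e : T.E, v' ∈ T.ends e → ¬(∀ x ∈ T.ends e, x ∈ C ∪ {v'}) →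
        (∀ x ∈ T.ends e, x ∈ X) → e = estar := by
      intro e hv'e hnful _
      refine huniqF e ?_
      simp only [Finset.mem_sdiff, hFv', hFB, Finset.mem_filter, Finset.mem_univ, true_and]
      exact ⟨hv'e, fun h => hnful h.1⟩
    have hclBv : ∀ x ∈ C ∪ {v'}, ∀ y ∈ X, T.adjGraph.Adj x y → y ≠ yy → y ∈ C ∪ {v'} := by
      intro x hx y hyX2 hadj hyu
      rcases hx with hxC | hxv
      · by_cases hyv : y = v'
        · exact Or.inr (by simp [hyv])
        · exact Or.inl (hclC x hxC y hyX2 hadj hyv)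
      · have hxveq : x = v' := Set.mem_singleton_iff.1 hxv
        rw [hxveq] at hadj
        by_cases hyBv : y ∈ C ∪ {v'}
        · exact hyBv
        · exfalso
          obtain ⟨e₂, he₂⟩ := hadj
          have he₂mem : e₂ ∈ Fv' \ FB := by
            simp only [Finset.mem_sdiff, hFv', hFB, Finset.mem_filter, Finset.mem_univ,
              true_and]
            constructor
            · rw [he₂]; exact Sym2.mem_iff.2 (Or.inl rfl)
            · rintro ⟨hins, _⟩
              exact hyBv (hins y (by rw [he₂]; exact Sym2.mem_iff.2 (Or.inr rfl)))
          have he₂estar := huniqF e₂ he₂mem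
          rw [he₂estar, hestar] at he₂
          rcases Sym2.eq_iff.1 he₂ with ⟨_, h⟩ | ⟨h1, h2⟩
          · exact hyu h.symm
          · exact hyB (by rw [h2]; exact Or.inr rfl)
    have hconnBv' := connBv hInv hcomp
    have hkeyconn : ∀ x, x ∈ X \ (C ∪ {v'}) →
        ∃ q : T.adjGraph.Walk yy x, ∀ z ∈ q.support, z ∈ X \ (C ∪ {v'}) := by
      intro x hx
      obtain ⟨p1, hp1⟩ := hInv.1.2 x hx.1 v' hv'X
      have hPp : (p1.toPath : T.adjGraph.Walk x v').IsPath := p1.toPath.2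
      have hPX : ∀ z ∈ (p1.toPath : T.adjGraph.Walk x v').support, z ∈ X :=
        fun z hz => hp1 z (p1.support_toPath_subset hz)
      have hPnC : ∀ z ∈ (p1.toPath : T.adjGraph.Walk x v').support, z ∉ C := by
        intro z hz hzC
        have h1 : v' ∈ ((p1.toPath : T.adjGraph.Walk x v').takeUntil z hz).support := by
          have := escape hclC ((p1.toPath : T.adjGraph.Walk x v').takeUntil z hz).reverse
            (fun w hw => by
              rw [Walk.support_reverse, List.mem_reverse] at hw
              exact hPX w (Walk.support_takeUntil_subset _ _ hw)) hzC
            (fun hxC => hx.2 (Or.inl hxC))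
          rwa [Walk.support_reverse, List.mem_reverse] at this
        have h2 : v' ∈ ((p1.toPath : T.adjGraph.Walk x v').dropUntil z hz).support :=
          ((p1.toPath : T.adjGraph.Walk x v').dropUntil z hz).end_mem_support
        exact pathDup _ hPp hz h1 h2 (fun h => hv'C (h ▸ hzC))
      have hxv'' : v' ≠ x := fun h => hx.2 (h ▸ Or.inr rfl)
      obtain ⟨w₁, hadj1, q, hq⟩ :=
        Walk.exists_eq_cons_of_ne hxv'' (p1.toPath : T.adjGraph.Walk x v').reverse
      have hPrev : (p1.toPath : T.adjGraph.Walk x v').reverse.IsPath := hPp.reverse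
      have hndq : v' ∉ q.support := by
        have h := hPrev.support_nodup
        rw [hq, Walk.support_cons] at h
        exact (List.nodup_cons.1 h).1
      have hqsub : ∀ z ∈ q.support, z ∈ (p1.toPath : T.adjGraph.Walk x v').support := by
        intro z hz
        have : z ∈ (p1.toPath : T.adjGraph.Walk x v').reverse.support := by
          rw [hq, Walk.support_cons]
          exact List.mem_cons_of_mem _ hz
        rwa [Walk.support_reverse, List.mem_reverse] at this
      have hqX'' : ∀ z ∈ q.support, z ∈ X \ (C ∪ {v'}) := by
        intro z hz
        refine ⟨hPX z (hqsub z hz), ?_⟩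
        rintro (hzC | hzv)
        · exact hPnC z (hqsub z hz) hzC
        · exact hndq (Set.mem_singleton_iff.1 hzv ▸ hz)
      have hw₁mem := hqX'' w₁ q.start_mem_support
      obtain ⟨e₃, he₃⟩ := hadj1
      have he₃mem : e₃ ∈ Fv' \ FB := by
        simp only [Finset.mem_sdiff, hFv', hFB, Finset.mem_filter, Finset.mem_univ, true_and]
        constructor
        · rw [he₃]; exact Sym2.mem_iff.2 (Or.inl rfl)
        · rintro ⟨hins, _⟩
          exact hw₁mem.2 (hins w₁ (by rw [he₃]; exact Sym2.mem_iff.2 (Or.inr rfl)))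
      have he₃estar := huniqF e₃ he₃mem
      rw [he₃estar, hestar] at he₃
      have hw₁u : w₁ = yy := by
        rcases Sym2.eq_iff.1 he₃ with ⟨_, h⟩ | ⟨h1, h2⟩
        · exact h.symm
        · exfalso
          exact hw₁mem.2 (by rw [← h1]; exact Or.inr rfl)
      subst hw₁u
      exact ⟨q, hqX''⟩
    have hu''X : yy ∈ X \ (C ∪ {v'}) := ⟨hyX, hyB⟩
    obtain ⟨Chat, hChatComp, hBvChat, hChatDisj, hChatOld⟩ :=
      hatComp hconn hInv hBvX ⟨v', hv'Bv⟩ hyX hyB hconnBv' hclBv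
    have hInv'' : Inv T (X \ (C ∪ {v'})) := by
      constructor
      · refine ⟨⟨yy, hu''X⟩, fun a ha b hb => ?_⟩
        obtain ⟨qa, hqa⟩ := hkeyconn a ha
        obtain ⟨qb, hqb⟩ := hkeyconn b hb
        refine ⟨qa.reverse.append qb, fun z hz => ?_⟩
        rcases (Walk.mem_support_append_iff _ _).1 hz with h | h
        · rw [Walk.support_reverse, List.mem_reverse] at h
          exact hqa z h
        · exact hqb z h
      · intro z hz
        by_cases hzX : z ∈ X
        · have hzBv : z ∈ C ∪ {v'} := by
            by_contra hzB
            exact hz ⟨hzX, hzB⟩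
          exact ⟨yy, Chat, hu''X, hChatComp, hBvChat hzBv, hChatDisj⟩
        · obtain ⟨vz, D, hvzX, hD, hzD, hDX⟩ := hInv.2 z hzX
          by_cases hvzBv : vz ∈ C ∪ {v'}
          · exact ⟨yy, Chat, hu''X, hChatComp, hChatOld vz D hvzBv hD hDX hzD, hChatDisj⟩
          · refine ⟨vz, D, ⟨hvzX, hvzBv⟩, hD, hzD, ?_⟩
            ext y
            simp only [Set.mem_inter_iff, Set.mem_empty_iff_false, iff_false, not_and]
            intro hyD hyX2
            exact notMem_of_inter_empty hDX hyX2.1 hyD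
    have hvcount : X.ncard = (X \ (C ∪ {v'})).ncard + (C ∪ {v'}).ncard := by
      have h1 := Set.ncard_diff hBvX (Set.toFinite _)
      have h2 := Set.ncard_le_ncard hBvX (Set.toFinite X)
      omega
    have hecount := ncard_split2 (T := T) hcomp hestar hyX hyB huniq
    have hlt : (X \ (C ∪ {v'})).ncard < X.ncard := by omega
    have hIH := IH _ hlt hInv''
    rw [show ((X.ncard : ℕ) : ℚ)
        = (((X \ (C ∪ {v'})).ncard : ℕ) : ℚ) + (((C ∪ {v'}).ncard : ℕ) : ℚ) from by
      exact_mod_cast congrArg Nat.cast hvcount]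
    rw [show ((eN T X : ℕ) : ℚ)
        = ((eN T (X \ (C ∪ {v'})) : ℕ) : ℚ) + ((eN T (C ∪ {v'}) : ℕ) : ℚ) + 1 from by
      exact_mod_cast congrArg Nat.cast hecount]
    linarith

end GTB2
namespace GTB2

open SignedGraph SimpleGraph

lemma mainAux (k : ℕ) (hk : 4 ≤ k) (T : SignedGraph) (hconn : T.Connected)
    (hsimple : T.SimpleUnderlying) (hdeg : ∀ v, T.degree v ≤ k - 1)
    (hblocks : ∀ B : T.Subgraph, B.IsBlock → B.toSG.IsBrick)
    (hnotK : ¬ (T.IsBalancedComplete ∧ Fintype.card T.V = k)) :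
    ∀ (n : ℕ) (X : Set T.V), X.ncard ≤ n → Inv T X →
      (2:ℚ) ≤ cQ (k:ℚ) * (X.ncard : ℚ) - 2 * (eN T X : ℚ) := by
  intro n
  induction n with
  | zero =>
    intro X hX0 hInv
    exfalso
    have := (Set.ncard_pos (Set.toFinite X)).2 hInv.1.1
    omega
  | succ n ih =>
    intro X hXn hInv
    by_cases h1 : X.ncard ≤ 1
    · have hone : X.ncard = 1 := by
        have := (Set.ncard_pos (Set.toFinite X)).2 hInv.1.1
        omega
      obtain ⟨x, hx⟩ := Set.ncard_eq_one.1 hone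
      have hE0 : eN T X = 0 := by
        unfold eN
        have hemp : {e : T.E | ∀ y ∈ T.ends e, y ∈ X} = ∅ := by
          ext e
          simp only [Set.mem_setOf_eq, Set.mem_empty_iff_false, iff_false]
          intro he
          obtain ⟨a, b, hab, hne⟩ := ends_pair T e
          have ha := he a (by rw [hab]; exact Sym2.mem_iff.2 (Or.inl rfl))
          have hb := he b (by rw [hab]; exact Sym2.mem_iff.2 (Or.inr rfl))
          rw [hx] at ha hb
          exact hne ((Set.mem_singleton_iff.1 ha).trans (Set.mem_singleton_iff.1 hb).symm)
        rw [hemp, Set.ncard_empty]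
      rw [hone, hE0]
      have := arith0 (show (4:ℚ) ≤ (k:ℚ) by exact_mod_cast hk)
      push_cast
      linarith
    · push_neg at h1
      by_cases hcut : ∃ w, CutIn T X w
      · exact caseCut k hk hconn hsimple hdeg hblocks hInv hcut
          (fun Y hY hIY => ih Y (by omega) hIY)
      · push_neg at hcut
        exact caseNoCut k hk hconn hsimple hdeg hblocks hnotK hInv h1 hcut

end GTB2

/-- Gallai-type bound for connected simple signed graphs all of
whose blocks are bricks. -/
theorem gallai_tree_bound (k : ℕ) (hk : 4 ≤ k) (T : SignedGraph)
    (hconn : T.Connected) (hsimple : T.SimpleUnderlying)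
    (hdeg : T.maxDegree ≤ k - 1)
    (hblocks : ∀ B : T.Subgraph, B.IsBlock → B.toSG.IsBrick)
    (hnotK : ¬ (T.IsBalancedComplete ∧ Fintype.card T.V = k)) :
    (2 : ℚ) ≤ ((k : ℚ) - 2 + 2 / ((k : ℚ) - 1)) * (Fintype.card T.V : ℚ)
      - 2 * (Fintype.card T.E : ℚ) := by
  have hdeg' : ∀ v, T.degree v ≤ k - 1 := fun v =>
    le_trans (Finset.le_sup (Finset.mem_univ v)) hdeg
  have hInvU : GTB2.Inv T Set.univ := by
    constructor
    · refine ⟨⟨hconn.nonempty.some, trivial⟩, fun x _ y _ => ?_⟩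
      obtain ⟨p⟩ := hconn.preconnected x y
      exact ⟨p, fun _ _ => trivial⟩
    · intro z hz
      exact absurd (Set.mem_univ z) hz
  have h := GTB2.mainAux k hk T hconn hsimple hdeg' hblocks hnotK
    (Set.univ : Set T.V).ncard Set.univ le_rfl hInvU
  rw [GTB2.card_univ_ncard, GTB2.eN_univ] at h
  exact h
end
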